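/- arXiv:1709.06887 — 7 statements merged into one kernel-verified Lean document; each statement's English description precedes it below -/
import Mathlib

section
/- If C ⊆ V is such that the subgraph induced by C contains no edges (i.e., 1_Cᵀ A 1_C = 0) and vol(C) = vol(V)/2, then the Newman–Girvan modularity satisfies Q(C) = -vol(V)/4. Moreover, -vol(V)/4 is a lower bound for Q(C) over all subsets C ⊆ V. -/
open Matrix Finset

/-- If the subgraph induced by `C` has no edges and `vol(C) = vol(V)/2`, then
`Q(C) = -vol(V)/4`; moreover `-vol(V)/4` is a lower bound for `Q` over all subsets. -/
theorem ng_modularity_bipartite_bound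
    (n : ℕ) (A : Matrix (Fin n) (Fin n) ℝ)
    (hAsym : A.IsSymm) (hA0 : ∀ i j, 0 ≤ A i j)
    (d : Fin n → ℝ) (hd : d = A *ᵥ 1)
    (vol : ℝ) (hvol : vol = ∑ i, d i) (hvolpos : 0 < vol)
    (M : Matrix (Fin n) (Fin n) ℝ)
    (hM : M = A - Matrix.of (fun i j => d i * d j / vol))
    (Q : Finset (Fin n) → ℝ)
    (hQ : ∀ C : Finset (Fin n),
      Q C = (fun i => if i ∈ C then (1:ℝ) else 0) ⬝ᵥ
            (M *ᵥ fun i => if i ∈ C then (1:ℝ) else 0))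
    (C : Finset (Fin n))
    (hCempty : (fun i => if i ∈ C then (1:ℝ) else 0) ⬝ᵥ
               (A *ᵥ fun i => if i ∈ C then (1:ℝ) else 0) = 0)
    (hChalf : ∑ i ∈ C, d i = vol / 2) :
    Q C = -vol / 4 ∧ ∀ C' : Finset (Fin n), -vol / 4 ≤ Q C' := by
  -- row sums
  have hdDef : ∀ i, d i = ∑ j, A i j := by
    intro i; rw [hd]; simp [Matrix.mulVec, dotProduct]
  have hd0 : ∀ i, 0 ≤ d i := by
    intro i; rw [hdDef]; exact Finset.sum_nonneg fun j _ => hA0 i j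
  -- column sums equal d as well
  have hcol : ∀ j, ∑ i, A i j = d j := by
    intro j
    rw [hdDef]
    exact Finset.sum_congr rfl fun i _ => by
      have := congrFun (congrFun hAsym.eq j) i
      simpa [Matrix.transpose_apply] using this
  -- the quadratic form with A, as a double sum
  have hAx : ∀ C' : Finset (Fin n),
      ((fun i => if i ∈ C' then (1:ℝ) else 0) ⬝ᵥ
        (A *ᵥ fun i => if i ∈ C' then (1:ℝ) else 0))
      = ∑ i ∈ C', ∑ j ∈ C', A i j := by
    intro C'
    simp [dotProduct, Matrix.mulVec, mul_ite, ite_mul,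
      Finset.sum_ite_mem, Finset.univ_inter]
  -- Q as P - s^2/vol
  have key : ∀ C' : Finset (Fin n),
      Q C' = (∑ i ∈ C', ∑ j ∈ C', A i j) - (∑ i ∈ C', d i) ^ 2 / vol := by
    intro C'
    rw [hQ, hM, Matrix.sub_mulVec, dotProduct_sub, hAx]
    congr 1
    simp only [Matrix.mulVec, dotProduct, Matrix.of_apply, mul_ite, ite_mul,
      mul_one, mul_zero, one_mul, zero_mul, Finset.sum_ite_mem, Finset.univ_inter]
    rw [sq, Finset.sum_mul_sum, Finset.sum_div]
    simp [Finset.sum_div]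
  -- bounds on P and s for an arbitrary C'
  have bounds : ∀ C' : Finset (Fin n),
      0 ≤ (∑ i ∈ C', ∑ j ∈ C', A i j) ∧
      2 * (∑ i ∈ C', d i) - vol ≤ (∑ i ∈ C', ∑ j ∈ C', A i j) ∧
      0 ≤ (∑ i ∈ C', d i) ∧ (∑ i ∈ C', d i) ≤ vol := by
    intro C'
    set s := ∑ i ∈ C', d i with hs
    have hP0 : 0 ≤ ∑ i ∈ C', ∑ j ∈ C', A i j :=
      Finset.sum_nonneg fun i _ => Finset.sum_nonneg fun j _ => hA0 i j
    have hs0 : 0 ≤ s := Finset.sum_nonneg fun i _ => hd0 i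
    have hsvol : s ≤ vol := by
      rw [hvol]
      exact Finset.sum_le_sum_of_subset_of_nonneg (Finset.subset_univ C')
        (fun i _ _ => hd0 i)
    have hsplit : ∀ i, (∑ j ∈ C', A i j) + (∑ j ∈ C'ᶜ, A i j) = d i := by
      intro i
      rw [hdDef]
      exact Finset.sum_add_sum_compl C' _
    have hcross : ∑ i ∈ C', ∑ j ∈ C'ᶜ, A i j ≤ vol - s := by
      have h1 : ∑ i ∈ C', ∑ j ∈ C'ᶜ, A i j ≤ ∑ i, ∑ j ∈ C'ᶜ, A i j :=
        Finset.sum_le_sum_of_subset_of_nonneg (Finset.subset_univ C')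
          (fun i _ _ => Finset.sum_nonneg fun j _ => hA0 i j)
      have h2 : ∑ i, ∑ j ∈ C'ᶜ, A i j = ∑ j ∈ C'ᶜ, d j := by
        refine Finset.sum_comm.trans ?_
        exact Finset.sum_congr rfl fun j _ => hcol j
      have h3 : ∑ j ∈ C'ᶜ, d j = vol - s := by
        have := Finset.sum_add_sum_compl C' d
        rw [← hvol] at this
        linarith [this]
      linarith [h1, h2.le, h2.ge]
    have hP2 : 2 * s - vol ≤ ∑ i ∈ C', ∑ j ∈ C', A i j := by
      have : ∑ i ∈ C', ∑ j ∈ C', A i j = s - ∑ i ∈ C', ∑ j ∈ C'ᶜ, A i j := by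
        rw [hs, ← Finset.sum_sub_distrib]
        exact Finset.sum_congr rfl fun i _ => by linarith [hsplit i]
      linarith [hcross]
    exact ⟨hP0, hP2, hs0, hsvol⟩
  constructor
  · rw [key C]
    rw [hAx] at hCempty
    rw [hCempty, hChalf]
    field_simp
    ring
  · intro C'
    obtain ⟨hP0, hP2, hs0, hsvol⟩ := bounds C'
    rw [key C']
    set s := ∑ i ∈ C', d i
    set P := ∑ i ∈ C', ∑ j ∈ C', A i j
    rcases le_or_gt s (vol / 2) with h | h
    · have h1 : s ^ 2 / vol ≤ vol / 4 := by
        rw [div_le_div_iff₀ hvolpos (by norm_num : (0:ℝ) < 4)]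
        nlinarith
      linarith
    · have hnum : 0 ≤ (2 * s - vol) * (3 * vol - 2 * s) :=
        mul_nonneg (by linarith) (by linarith)
      have heq : (2 * s - vol) - s ^ 2 / vol + vol / 4
          = (2 * s - vol) * (3 * vol - 2 * s) / (4 * vol) := by
        field_simp
        ring
      have hpos : 0 ≤ (2 * s - vol) * (3 * vol - 2 * s) / (4 * vol) :=
        div_nonneg hnum (by linarith)
      linarith
end

section
/- Hoffman–Wielandt inequality for singular values: if A and B are n×n real matrices with singular values s₁(A) ≥ … ≥ sₙ(A) and s₁(B) ≥ … ≥ sₙ(B), then ∑_{i=1}^n (sᵢ(A) - sᵢ(B))² ≤ ‖A - B‖_F². -/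
open Matrix Finset

/-- A linear functional `S ↦ ∑ᵢⱼ aᵢ bⱼ Sᵢⱼ` over doubly stochastic matrices is bounded by
`∑ aᵢ bᵢ` when `a` and `b` monovary, by Birkhoff's theorem and the rearrangement inequality. -/
lemma hw_key {n : ℕ} (a b : Fin n → ℝ) (hab : Monovary a b)
    (S : Matrix (Fin n) (Fin n) ℝ) (hS : S ∈ doublyStochastic ℝ (Fin n)) :
    ∑ i, ∑ j, a i * b j * S i j ≤ ∑ i, a i * b i := by
  obtain ⟨w, hw0, hw1, hwS⟩ := exists_eq_sum_perm_of_mem_doublyStochastic hS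
  have hSij : ∀ i j, S i j = ∑ σ : Equiv.Perm (Fin n), w σ * (σ.permMatrix ℝ) i j := by
    intro i j
    rw [← hwS, Matrix.sum_apply]
    simp
  have hrow : ∀ i, ∑ j, a i * b j * S i j = ∑ σ : Equiv.Perm (Fin n), w σ * (a i * b (σ i)) := by
    intro i
    simp_rw [hSij, Finset.mul_sum]
    rw [Finset.sum_comm]
    refine Finset.sum_congr rfl fun σ _ => ?_
    rw [Finset.sum_eq_single (σ i)]
    · simp [Equiv.Perm.permMatrix, PEquiv.toMatrix_apply, Equiv.toPEquiv_apply]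
      ring
    · intro j _ hj
      simp [Equiv.Perm.permMatrix, PEquiv.toMatrix_apply, Equiv.toPEquiv_apply, Ne.symm hj]
    · simp
  calc ∑ i, ∑ j, a i * b j * S i j
      = ∑ σ : Equiv.Perm (Fin n), w σ * ∑ i, a i * b (σ i) := by
        simp_rw [hrow, Finset.mul_sum]
        exact Finset.sum_comm
    _ ≤ ∑ σ : Equiv.Perm (Fin n), w σ * ∑ i, a i * b i := by
        refine Finset.sum_le_sum fun σ _ => mul_le_mul_of_nonneg_left ?_ (hw0 σ)
        exact hab.sum_mul_comp_perm_le_sum_mul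
    _ = ∑ i, a i * b i := by rw [← Finset.sum_mul, hw1, one_mul]

/-- Frobenius norm squared of `U * diagonal s * Vᵀ` is `∑ s i ^ 2`. -/
lemma hw_frob {n : ℕ} (U V : Matrix (Fin n) (Fin n) ℝ) (s : Fin n → ℝ)
    (hU : Uᵀ * U = 1) (hV : Vᵀ * V = 1) :
    ∑ r, ∑ c, (U * Matrix.diagonal s * Vᵀ) r c ^ 2 = ∑ i, s i ^ 2 := by
  set M := U * Matrix.diagonal s * Vᵀ with hM
  have h1 : ∑ r, ∑ c, M r c ^ 2 = Matrix.trace (Mᵀ * M) := by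
    rw [Matrix.trace]
    rw [Finset.sum_comm]
    refine Finset.sum_congr rfl fun r _ => ?_
    simp [Matrix.diag, Matrix.mul_apply, sq, Finset.sum_comm (γ := Fin n)]
  have h2 : Mᵀ * M = V * (Matrix.diagonal s * Matrix.diagonal s) * Vᵀ := by
    rw [hM]
    simp only [Matrix.transpose_mul, Matrix.diagonal_transpose, Matrix.transpose_transpose,
      Matrix.mul_assoc]
    rw [← Matrix.mul_assoc Uᵀ U, hU, Matrix.one_mul]
  rw [h1, h2, Matrix.trace_mul_comm, ← Matrix.mul_assoc, hV, Matrix.one_mul,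
    Matrix.diagonal_mul_diagonal, Matrix.trace_diagonal]
  simp [sq]

/-- The Frobenius inner product of two matrices in terms of their SVD factors. -/
lemma hw_cross {n : ℕ} (UA VA UB VB : Matrix (Fin n) (Fin n) ℝ) (sA sB : Fin n → ℝ) :
    ∑ r, ∑ c, (UA * Matrix.diagonal sA * VAᵀ) r c * (UB * Matrix.diagonal sB * VBᵀ) r c
      = ∑ i, ∑ j, sA i * sB j * ((UAᵀ * UB) i j * (VAᵀ * VB) i j) := by
  set A := UA * Matrix.diagonal sA * VAᵀ with hA
  set B := UB * Matrix.diagonal sB * VBᵀ with hB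
  have h1 : ∑ r, ∑ c, A r c * B r c = Matrix.trace (Aᵀ * B) := by
    rw [Matrix.trace, Finset.sum_comm]
    refine Finset.sum_congr rfl fun r _ => ?_
    simp [Matrix.diag, Matrix.mul_apply, Finset.sum_comm (γ := Fin n)]
  have h2 : Matrix.trace (Aᵀ * B) =
      Matrix.trace ((VBᵀ * VA) * (Matrix.diagonal sA * ((UAᵀ * UB) * Matrix.diagonal sB))) := by
    rw [hA, hB]
    simp only [Matrix.transpose_mul, Matrix.diagonal_transpose, Matrix.transpose_transpose,
      Matrix.mul_assoc]
    rw [Matrix.trace_mul_comm]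
    conv_rhs => rw [Matrix.trace_mul_comm]
    simp only [Matrix.mul_assoc]
    conv_rhs => rw [Matrix.trace_mul_comm]
    simp only [Matrix.mul_assoc]
  rw [h1, h2, Matrix.trace, Finset.sum_comm]
  refine Finset.sum_congr rfl fun i _ => ?_
  show ((VBᵀ * VA) * (Matrix.diagonal sA * ((UAᵀ * UB) * Matrix.diagonal sB))) i i = _
  rw [Matrix.mul_apply]
  refine Finset.sum_congr rfl fun x _ => ?_
  have hQ : (VBᵀ * VA) i x = (VAᵀ * VB) x i := by
    conv_lhs => rw [show VBᵀ * VA = (VAᵀ * VB)ᵀ by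
      rw [Matrix.transpose_mul, Matrix.transpose_transpose]]
    exact Matrix.transpose_apply _ _ _
  rw [hQ, Matrix.diagonal_mul, Matrix.mul_diagonal]
  ring

/-- Hoffman–Wielandt inequality for singular values:
`∑ᵢ (sᵢ(A) - sᵢ(B))² ≤ ‖A - B‖_F²`. -/
theorem hoffman_wielandt_singular_values
    (n : ℕ) (A B : Matrix (Fin n) (Fin n) ℝ)
    (sA sB : Fin n → ℝ)
    (hsA0 : ∀ i, 0 ≤ sA i) (hsB0 : ∀ i, 0 ≤ sB i)
    (hsAmono : ∀ i j : Fin n, i ≤ j → sA j ≤ sA i)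
    (hsBmono : ∀ i j : Fin n, i ≤ j → sB j ≤ sB i)
    (UA VA UB VB : Matrix (Fin n) (Fin n) ℝ)
    (hUA : UAᵀ * UA = 1) (hVA : VAᵀ * VA = 1)
    (hUB : UBᵀ * UB = 1) (hVB : VBᵀ * VB = 1)
    (hA : A = UA * Matrix.diagonal sA * VAᵀ)
    (hB : B = UB * Matrix.diagonal sB * VBᵀ) :
    ∑ i, (sA i - sB i) ^ 2 ≤ ∑ r, ∑ c, (A r c - B r c) ^ 2 := by
  -- orthogonality in the other order
  have hUAo : UA * UAᵀ = 1 := mul_eq_one_comm.mp hUA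
  have hVAo : VA * VAᵀ = 1 := mul_eq_one_comm.mp hVA
  have hUBo : UB * UBᵀ = 1 := mul_eq_one_comm.mp hUB
  have hVBo : VB * VBᵀ = 1 := mul_eq_one_comm.mp hVB
  set P := UAᵀ * UB with hPdef
  set Q := VAᵀ * VB with hQdef
  have hPPT : P * Pᵀ = 1 := by
    rw [hPdef, Matrix.transpose_mul, Matrix.transpose_transpose, Matrix.mul_assoc,
      ← Matrix.mul_assoc UB UBᵀ UA, hUBo, Matrix.one_mul, hUA]
  have hPTP : Pᵀ * P = 1 := mul_eq_one_comm.mp hPPT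
  have hQQT : Q * Qᵀ = 1 := by
    rw [hQdef, Matrix.transpose_mul, Matrix.transpose_transpose, Matrix.mul_assoc,
      ← Matrix.mul_assoc VB VBᵀ VA, hVBo, Matrix.one_mul, hVA]
  have hQTQ : Qᵀ * Q = 1 := mul_eq_one_comm.mp hQQT
  -- squared-entry row and column sums are 1
  have hProw : ∀ i, ∑ j, P i j ^ 2 = 1 := by
    intro i
    have h : (P * Pᵀ) i i = (1 : Matrix (Fin n) (Fin n) ℝ) i i := by rw [hPPT]
    simpa [Matrix.mul_apply, Matrix.one_apply, sq] using h
  have hPcol : ∀ j, ∑ i, P i j ^ 2 = 1 := by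
    intro j
    have h : (Pᵀ * P) j j = (1 : Matrix (Fin n) (Fin n) ℝ) j j := by rw [hPTP]
    simpa [Matrix.mul_apply, Matrix.one_apply, sq] using h
  have hQrow : ∀ i, ∑ j, Q i j ^ 2 = 1 := by
    intro i
    have h : (Q * Qᵀ) i i = (1 : Matrix (Fin n) (Fin n) ℝ) i i := by rw [hQQT]
    simpa [Matrix.mul_apply, Matrix.one_apply, sq] using h
  have hQcol : ∀ j, ∑ i, Q i j ^ 2 = 1 := by
    intro j
    have h : (Qᵀ * Q) j j = (1 : Matrix (Fin n) (Fin n) ℝ) j j := by rw [hQTQ]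
    simpa [Matrix.mul_apply, Matrix.one_apply, sq] using h
  -- the doubly stochastic matrix
  set S : Matrix (Fin n) (Fin n) ℝ := Matrix.of fun i j => (P i j ^ 2 + Q i j ^ 2) / 2 with hSdef
  have hS : S ∈ doublyStochastic ℝ (Fin n) := by
    rw [mem_doublyStochastic_iff_sum]
    refine ⟨fun i j => ?_, fun i => ?_, fun j => ?_⟩
    · show (0:ℝ) ≤ (P i j ^ 2 + Q i j ^ 2) / 2
      positivity
    · show ∑ j, (P i j ^ 2 + Q i j ^ 2) / 2 = 1
      rw [← Finset.sum_div, Finset.sum_add_distrib, hProw, hQrow]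
      norm_num
    · show ∑ i, (P i j ^ 2 + Q i j ^ 2) / 2 = 1
      rw [← Finset.sum_div, Finset.sum_add_distrib, hPcol, hQcol]
      norm_num
  -- sA and sB monovary
  have hmono : Monovary sA sB := by
    intro i j h
    rcases le_total i j with hij | hij
    · exact absurd h (not_lt.mpr (hsBmono i j hij))
    · exact hsAmono j i hij
  -- the von Neumann trace bound
  have hT : ∑ i, ∑ j, sA i * sB j * (P i j * Q i j) ≤ ∑ i, sA i * sB i := by
    calc ∑ i, ∑ j, sA i * sB j * (P i j * Q i j)
        ≤ ∑ i, ∑ j, sA i * sB j * S i j := by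
          refine Finset.sum_le_sum fun i _ => Finset.sum_le_sum fun j _ => ?_
          refine mul_le_mul_of_nonneg_left ?_ (mul_nonneg (hsA0 i) (hsB0 j))
          show P i j * Q i j ≤ (P i j ^ 2 + Q i j ^ 2) / 2
          nlinarith [sq_nonneg (P i j - Q i j)]
      _ ≤ ∑ i, sA i * sB i := hw_key sA sB hmono S hS
  -- expansions
  have hFA : ∑ r, ∑ c, A r c ^ 2 = ∑ i, sA i ^ 2 := by
    rw [hA]; exact hw_frob UA VA sA hUA hVA
  have hFB : ∑ r, ∑ c, B r c ^ 2 = ∑ i, sB i ^ 2 := by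
    rw [hB]; exact hw_frob UB VB sB hUB hVB
  have hC : ∑ r, ∑ c, A r c * B r c = ∑ i, ∑ j, sA i * sB j * (P i j * Q i j) := by
    rw [hA, hB]; exact hw_cross UA VA UB VB sA sB
  have hL : ∑ i, (sA i - sB i) ^ 2
      = ∑ i, sA i ^ 2 + ∑ i, sB i ^ 2 - 2 * ∑ i, sA i * sB i := by
    simp only [sub_sq]
    simp_rw [mul_assoc]
    rw [Finset.sum_add_distrib, Finset.sum_sub_distrib, ← Finset.mul_sum]
    ring
  have hR : ∑ r, ∑ c, (A r c - B r c) ^ 2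
      = ∑ r, ∑ c, A r c ^ 2 + ∑ r, ∑ c, B r c ^ 2 - 2 * ∑ r, ∑ c, A r c * B r c := by
    have hrow : ∀ r, ∑ c, (A r c - B r c) ^ 2
        = ∑ c, A r c ^ 2 + ∑ c, B r c ^ 2 - 2 * ∑ c, A r c * B r c := by
      intro r
      simp only [sub_sq]
      simp_rw [mul_assoc]
      rw [Finset.sum_add_distrib, Finset.sum_sub_distrib, ← Finset.mul_sum]
      ring
    simp_rw [hrow]
    rw [Finset.sum_sub_distrib, Finset.sum_add_distrib, ← Finset.mul_sum]
  rw [hL, hR, hFA, hFB, hC]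
  linarith
end

section
/- For a symmetric matrix M ∈ ℝ^{n×n} with eigenvalues |λ₁| ≥ … ≥ |λₙ| and X ∈ ℝ^{n×k} with orthonormal columns, the squared cosine between M and H(X), defined as cos(M,H(X))² = ‖P‖_F²/‖M‖_F² where P is the Frobenius-orthogonal projection of M onto H(X), satisfies cos(M,H(X))² ≤ (∑_{i=1}^k λᵢ²)/(∑_{i=1}^n λᵢ²), with equality attained when the columns of X are eigenvectors for λ₁,…,λ_k. -/
open Matrix Finset

lemma sum_sq_inner (n k : ℕ) (X : Matrix (Fin n) (Fin k) ℝ)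
    (hX : ∀ i j, (∑ r, X r i * X r j) = if i = j then (1:ℝ) else 0)
    (w : Fin k → ℝ) :
    ∑ r, (∑ i, X r i * w i)^2 = ∑ i, (w i)^2 := by
  have h1 : ∀ r, (∑ i, X r i * w i)^2
      = ∑ i, ∑ j, (w i * w j) * (X r i * X r j) := by
    intro r
    rw [sq, Finset.sum_mul_sum]
    exact Finset.sum_congr rfl fun i _ => Finset.sum_congr rfl fun j _ => by ring
  calc ∑ r, (∑ i, X r i * w i)^2
      = ∑ r, ∑ i, ∑ j, (w i * w j) * (X r i * X r j) := by
        exact Finset.sum_congr rfl fun r _ => h1 r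
    _ = ∑ i, ∑ j, (w i * w j) * ∑ r, (X r i * X r j) := by
        rw [Finset.sum_comm]
        refine Finset.sum_congr rfl fun i _ => ?_
        rw [Finset.sum_comm]
        refine Finset.sum_congr rfl fun j _ => ?_
        rw [Finset.mul_sum]
    _ = ∑ i, (w i)^2 := by
        simp only [hX, mul_ite, mul_one, mul_zero, Finset.sum_ite_eq, mem_univ, if_true]
        exact Finset.sum_congr rfl fun i _ => by ring
-- ‖P‖² = ∑ α²
lemma pnorm (n k : ℕ) (X : Matrix (Fin n) (Fin k) ℝ)
    (hX : ∀ i j, (∑ r, X r i * X r j) = if i = j then (1:ℝ) else 0)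
    (a : Fin k → ℝ) :
    ∑ r, ∑ c, (∑ i, a i * (X r i * X c i))^2 = ∑ i, (a i)^2 := by
  have h1 : ∀ r, ∑ c, (∑ i, X c i * (a i * X r i))^2 = ∑ i, (a i * X r i)^2 :=
    fun r => sum_sq_inner n k X hX _
  calc ∑ r, ∑ c, (∑ i, a i * (X r i * X c i))^2
      = ∑ r, ∑ c, (∑ i, X c i * (a i * X r i))^2 := by
        refine Finset.sum_congr rfl fun r _ => Finset.sum_congr rfl fun c _ => ?_
        congr 1; exact Finset.sum_congr rfl fun i _ => by ring
    _ = ∑ r, ∑ i, (a i * X r i)^2 := Finset.sum_congr rfl fun r _ => h1 r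
    _ = ∑ i, (a i)^2 * ∑ r, X r i * X r i := by
        rw [Finset.sum_comm]
        refine Finset.sum_congr rfl fun i _ => ?_
        rw [Finset.mul_sum]
        exact Finset.sum_congr rfl fun r _ => by ring
    _ = ∑ i, (a i)^2 := by
        refine Finset.sum_congr rfl fun i _ => ?_
        rw [hX i i]; simp

-- Bessel
lemma bessel (n k : ℕ) (X : Matrix (Fin n) (Fin k) ℝ)
    (hX : ∀ i j, (∑ r, X r i * X r j) = if i = j then (1:ℝ) else 0)
    (v : Fin n → ℝ) :
    ∑ i, (∑ r, v r * X r i)^2 ≤ ∑ r, (v r)^2 := by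
  set w : Fin k → ℝ := fun i => ∑ r, v r * X r i with hw
  set s : Fin n → ℝ := fun r => ∑ i, X r i * w i with hs
  have hss : ∑ r, (s r)^2 = ∑ i, (w i)^2 := sum_sq_inner n k X hX w
  have hvs : ∑ r, v r * s r = ∑ i, (w i)^2 := by
    calc ∑ r, v r * s r = ∑ r, ∑ i, (v r * X r i) * w i := by
          refine Finset.sum_congr rfl fun r _ => ?_
          rw [hs, Finset.mul_sum]
          exact Finset.sum_congr rfl fun i _ => by ring
      _ = ∑ i, (∑ r, v r * X r i) * w i := by
          rw [Finset.sum_comm]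
          exact Finset.sum_congr rfl fun i _ => (Finset.sum_mul _ _ _).symm
      _ = ∑ i, (w i)^2 := Finset.sum_congr rfl fun i _ => by rw [hw]; ring
  have h0 : (0:ℝ) ≤ ∑ r, (v r - s r)^2 :=
    Finset.sum_nonneg fun r _ => sq_nonneg _
  have hexp : ∑ r, (v r - s r)^2 = ∑ r, (v r)^2 - 2 * ∑ r, v r * s r + ∑ r, (s r)^2 := by
    rw [Finset.mul_sum, ← Finset.sum_sub_distrib, ← Finset.sum_add_distrib]
    exact Finset.sum_congr rfl fun r _ => by ring
  rw [hexp, hvs, hss] at h0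
  linarith
lemma rearrange (n k : ℕ) (hk : k ≤ n) (a d : Fin n → ℝ)
    (ha0 : ∀ j, 0 ≤ a j) (hamono : ∀ i j : Fin n, i ≤ j → a j ≤ a i)
    (hd0 : ∀ j, 0 ≤ d j) (hd1 : ∀ j, d j ≤ 1) (hsum : ∑ j, d j = k) :
    ∑ j, d j * a j ≤ ∑ j : Fin k, a (Fin.castLE hk j) := by
  classical
  set S : Finset (Fin n) := Finset.univ.filter (fun j => (j : ℕ) < k) with hS
  have hmap : S = Finset.univ.map (Fin.castLEEmb hk) := by
    ext j
    simp only [hS, Finset.mem_filter, Finset.mem_univ, true_and, Finset.mem_map,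
      Fin.castLEEmb_apply]
    constructor
    · intro h; exact ⟨⟨j, h⟩, rfl⟩
    · rintro ⟨i, rfl⟩; exact i.isLt
  have hSsum : ∑ j : Fin k, a (Fin.castLE hk j) = ∑ j ∈ S, a j := by
    rw [hmap, Finset.sum_map]; rfl
  have hcard : (S.card : ℝ) = k := by rw [hmap]; simp
  set t : ℝ := if h : k < n then a ⟨k, h⟩ else 0 with ht
  have ht0 : 0 ≤ t := by
    rw [ht]; split <;> [exact ha0 _; rfl]
  have htle : ∀ j ∈ S, t ≤ a j := by
    intro j hj
    rw [hS, Finset.mem_filter] at hj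
    rw [ht]; split
    · next h => exact hamono j ⟨k, h⟩ (by exact le_of_lt hj.2)
    · exact ha0 j
  have htge : ∀ j ∉ S, a j ≤ t := by
    intro j hj
    rw [hS, Finset.mem_filter] at hj
    simp only [Finset.mem_univ, true_and, not_lt] at hj
    have hkn : k < n := lt_of_le_of_lt hj j.isLt
    rw [ht, dif_pos hkn]
    exact hamono ⟨k, hkn⟩ j hj
  have hsplit : ∑ j, d j * a j = ∑ j ∈ S, d j * a j + ∑ j ∈ Sᶜ, d j * a j :=
    (Finset.sum_add_sum_compl S _).symm
  have hdsplit : ∑ j ∈ S, d j + ∑ j ∈ Sᶜ, d j = (k : ℝ) := by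
    rw [Finset.sum_add_sum_compl S d]; exact hsum
  have h1 : ∑ j ∈ Sᶜ, d j * a j ≤ t * ∑ j ∈ Sᶜ, d j := by
    rw [Finset.mul_sum]
    refine Finset.sum_le_sum fun j hj => ?_
    have := htge j (by simpa using hj)
    nlinarith [hd0 j]
  have h2 : ∑ j ∈ S, (d j * a j + t * (1 - d j)) ≤ ∑ j ∈ S, a j := by
    refine Finset.sum_le_sum fun j hj => ?_
    have h := htle j hj
    nlinarith [hd1 j, hd0 j, ha0 j]
  have h3 : ∑ j ∈ S, (d j * a j + t * (1 - d j))
      = ∑ j ∈ S, d j * a j + t * ((S.card : ℝ) - ∑ j ∈ S, d j) := by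
    rw [Finset.sum_add_distrib, ← Finset.mul_sum, Finset.sum_sub_distrib]
    simp
  rw [hSsum, hsplit]
  have h4 : t * ∑ j ∈ Sᶜ, d j = t * ((S.card : ℝ) - ∑ j ∈ S, d j) := by
    rw [hcard]; congr 1; linarith
  linarith [h1, h2, h3.symm.trans_le h2]
lemma Mentry (n : ℕ) (U : Matrix (Fin n) (Fin n) ℝ) (lam : Fin n → ℝ) (r c : Fin n) :
    (U * Matrix.diagonal lam * Uᵀ) r c = ∑ j, U r j * (lam j * U c j) := by
  rw [Matrix.mul_assoc, Matrix.mul_apply]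
  refine Finset.sum_congr rfl fun j _ => ?_
  rw [Matrix.diagonal_mul, Matrix.transpose_apply]

lemma alpha_formula (n : ℕ) (U : Matrix (Fin n) (Fin n) ℝ) (lam : Fin n → ℝ)
    (M : Matrix (Fin n) (Fin n) ℝ) (hM : M = U * Matrix.diagonal lam * Uᵀ)
    (x : Fin n → ℝ) :
    x ⬝ᵥ (M *ᵥ x) = ∑ j, lam j * (∑ r, U r j * x r)^2 := by
  have h1 : x ⬝ᵥ (M *ᵥ x) = ∑ r, ∑ c, ∑ j, lam j * ((U r j * x r) * (U c j * x c)) := by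
    rw [dotProduct]
    refine Finset.sum_congr rfl fun r _ => ?_
    rw [mulVec, dotProduct, Finset.mul_sum]
    refine Finset.sum_congr rfl fun c _ => ?_
    rw [hM, Mentry, Finset.sum_mul, Finset.mul_sum]
    refine Finset.sum_congr rfl fun j _ => by ring
  calc x ⬝ᵥ (M *ᵥ x)
      = ∑ r, ∑ c, ∑ j, lam j * ((U r j * x r) * (U c j * x c)) := h1
    _ = ∑ r, ∑ j, ∑ c, lam j * ((U r j * x r) * (U c j * x c)) :=
        Finset.sum_congr rfl fun r _ => Finset.sum_comm
    _ = ∑ j, ∑ r, ∑ c, lam j * ((U r j * x r) * (U c j * x c)) := Finset.sum_comm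
    _ = ∑ j, lam j * (∑ r, U r j * x r)^2 := by
        refine Finset.sum_congr rfl fun j _ => ?_
        rw [sq, Finset.sum_mul_sum, Finset.mul_sum]
        refine Finset.sum_congr rfl fun r _ => ?_
        rw [Finset.mul_sum]

lemma Mfro (n : ℕ) (U : Matrix (Fin n) (Fin n) ℝ) (hU : Uᵀ * U = 1) (lam : Fin n → ℝ)
    (M : Matrix (Fin n) (Fin n) ℝ) (hM : M = U * Matrix.diagonal lam * Uᵀ) :
    ∑ r, ∑ c, (M r c)^2 = ∑ i, (lam i)^2 := by
  have htr : Matrix.trace (M * Mᵀ) = ∑ r, ∑ c, (M r c)^2 := by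
    simp [Matrix.trace, Matrix.mul_apply, Matrix.diag, sq]
  have hMt : Mᵀ = M := by
    rw [hM]; simp [Matrix.transpose_mul, Matrix.mul_assoc]
  have hMM : M * Mᵀ = U * (Matrix.diagonal lam * (Matrix.diagonal lam * Uᵀ)) := by
    rw [hMt, hM]
    simp only [Matrix.mul_assoc]
    rw [← Matrix.mul_assoc Uᵀ U, hU, Matrix.one_mul]
  rw [← htr, hMM]
  rw [Matrix.trace_mul_comm]
  simp only [Matrix.mul_assoc]
  rw [hU]
  simp [Matrix.diagonal_mul_diagonal, Matrix.trace_diagonal, sq]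

/-- `cos(M, H(X))² ≤ (∑_{i≤k} λᵢ²)/(∑ᵢ λᵢ²)`, with equality when the columns of `X`
are eigenvectors for the `k` leading eigenvalues. -/
theorem cos_H_upper_bound
    (n k : ℕ) (hk : k ≤ n)
    (U : Matrix (Fin n) (Fin n) ℝ) (hU : Uᵀ * U = 1)
    (lam : Fin n → ℝ)
    (hmono : ∀ i j : Fin n, i ≤ j → |lam j| ≤ |lam i|)
    (M : Matrix (Fin n) (Fin n) ℝ)
    (hM : M = U * Matrix.diagonal lam * Uᵀ) (hM0 : M ≠ 0)
    (X : Matrix (Fin n) (Fin k) ℝ) (hX : Xᵀ * X = 1)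
    (P : Matrix (Fin n) (Fin n) ℝ)
    (hP : P = ∑ i : Fin k,
      ((fun r => X r i) ⬝ᵥ (M *ᵥ fun r => X r i)) •
        vecMulVec (fun r => X r i) (fun r => X r i)) :
    (∑ r, ∑ c, (P r c) ^ 2) / (∑ r, ∑ c, (M r c) ^ 2) ≤
      (∑ j : Fin k, (lam (Fin.castLE hk j)) ^ 2) / (∑ i, (lam i) ^ 2) ∧
    ((∀ (i : Fin n) (j : Fin k), X i j = U i (Fin.castLE hk j)) →
      (∑ r, ∑ c, (P r c) ^ 2) / (∑ r, ∑ c, (M r c) ^ 2) =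
        (∑ j : Fin k, (lam (Fin.castLE hk j)) ^ 2) / (∑ i, (lam i) ^ 2)) := by
  classical
  -- orthonormality in elementwise form
  have horthX : ∀ i j : Fin k, (∑ r, X r i * X r j) = if i = j then (1:ℝ) else 0 := by
    intro i j
    have h := congrFun (congrFun hX i) j
    simpa [Matrix.mul_apply, Matrix.transpose_apply, Matrix.one_apply] using h
  have hUU : U * Uᵀ = 1 := mul_eq_one_comm.mp hU
  have horthU : ∀ i j : Fin n, (∑ r, U r i * U r j) = if i = j then (1:ℝ) else 0 := by
    intro i j
    have h := congrFun (congrFun hU i) j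
    simpa [Matrix.mul_apply, Matrix.transpose_apply, Matrix.one_apply] using h
  have horthUt : ∀ i j : Fin n, (∑ r, Uᵀ r i * Uᵀ r j) = if i = j then (1:ℝ) else 0 := by
    intro i j
    have h := congrFun (congrFun hUU i) j
    simpa [Matrix.mul_apply, Matrix.transpose_apply, Matrix.one_apply] using h
  set a : Fin k → ℝ := fun i => (fun r => X r i) ⬝ᵥ (M *ᵥ fun r => X r i) with ha
  set e : Fin k → Fin n → ℝ := fun i j => ∑ r, U r j * X r i with he
  have halpha : ∀ i, a i = ∑ j, lam j * (e i j)^2 := fun i =>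
    alpha_formula n U lam M hM _
  -- P entries
  have hPentry : ∀ r c, P r c = ∑ i, a i * (X r i * X c i) := by
    intro r c
    rw [hP]
    simp [Matrix.sum_apply, Matrix.smul_apply, Matrix.vecMulVec_apply, smul_eq_mul, ha]
  -- Frobenius norms
  have hPfro : ∑ r, ∑ c, (P r c)^2 = ∑ i, (a i)^2 := by
    calc ∑ r, ∑ c, (P r c)^2 = ∑ r, ∑ c, (∑ i, a i * (X r i * X c i))^2 := by
          exact Finset.sum_congr rfl fun r _ => Finset.sum_congr rfl fun c _ => by
            rw [hPentry]
      _ = ∑ i, (a i)^2 := pnorm n k X horthX a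
  have hMfro : ∑ r, ∑ c, (M r c)^2 = ∑ i, (lam i)^2 := Mfro n U hU lam M hM
  -- denominator positive
  have hDpos : 0 < ∑ i, (lam i)^2 := by
    rw [← hMfro]
    have hne : ∃ r c, M r c ≠ 0 := by
      by_contra h
      push_neg at h
      exact hM0 (by ext r c; exact h r c)
    obtain ⟨r0, c0, h0⟩ := hne
    refine Finset.sum_pos' (fun r _ => Finset.sum_nonneg fun c _ => sq_nonneg _) ?_
    exact ⟨r0, Finset.mem_univ _, Finset.sum_pos'
      (fun c _ => sq_nonneg _) ⟨c0, Finset.mem_univ _, by positivity⟩⟩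
  -- row sums of e² are 1
  have hrow : ∀ i, ∑ j, (e i j)^2 = 1 := by
    intro i
    have h := sum_sq_inner n n Uᵀ horthUt (fun r => X r i)
    have h2 : ∑ j, (e i j)^2 = ∑ r, (X r i)^2 := by
      rw [← h]
      refine Finset.sum_congr rfl fun j _ => ?_
      simp only [Matrix.transpose_apply]
      rfl
    rw [h2]
    simpa [pow_two] using horthX i i
  -- Cauchy–Schwarz per i
  have hcs : ∀ i, (a i)^2 ≤ ∑ j, (lam j)^2 * (e i j)^2 := by
    intro i
    have h1 : a i = ∑ j, e i j * (lam j * e i j) := by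
      rw [halpha]
      exact Finset.sum_congr rfl fun j _ => by ring
    have h2 := Finset.sum_mul_sq_le_sq_mul_sq Finset.univ (fun j => e i j)
      (fun j => lam j * e i j)
    rw [← h1, hrow i, one_mul] at h2
    calc (a i)^2 ≤ ∑ j, (lam j * e i j)^2 := h2
      _ = ∑ j, (lam j)^2 * (e i j)^2 := Finset.sum_congr rfl fun j _ => by ring
  -- column sums d
  set d : Fin n → ℝ := fun j => ∑ i, (e i j)^2 with hd
  have hd0 : ∀ j, 0 ≤ d j := fun j => Finset.sum_nonneg fun i _ => sq_nonneg _
  have hd1 : ∀ j, d j ≤ 1 := by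
    intro j
    have h := bessel n k X horthX (fun r => U r j)
    have h2 : ∑ r, (U r j)^2 = 1 := by
      simpa [pow_two] using horthU j j
    rw [h2] at h
    exact h
  have hdsum : ∑ j, d j = (k : ℝ) := by
    rw [hd]
    rw [Finset.sum_comm]
    rw [Finset.sum_congr rfl fun i (_ : i ∈ Finset.univ) => hrow i]
    simp
  -- main inequality on numerators
  have hmain : ∑ i, (a i)^2 ≤ ∑ j : Fin k, (lam (Fin.castLE hk j))^2 := by
    have h1 : ∑ i, (a i)^2 ≤ ∑ j, d j * (lam j)^2 := by
      calc ∑ i, (a i)^2 ≤ ∑ i, ∑ j, (lam j)^2 * (e i j)^2 :=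
            Finset.sum_le_sum fun i _ => hcs i
        _ = ∑ j, d j * (lam j)^2 := by
            rw [Finset.sum_comm]
            refine Finset.sum_congr rfl fun j _ => ?_
            show ∑ i, (lam j)^2 * (e i j)^2 = (∑ i, (e i j)^2) * (lam j)^2
            rw [Finset.sum_mul]
            exact Finset.sum_congr rfl fun i _ => by ring
    have h2 := rearrange n k hk (fun j => (lam j)^2) d
      (fun j => sq_nonneg _)
      (fun i j hij => by
        have := hmono i j hij
        calc (lam j)^2 = |lam j|^2 := (sq_abs _).symm
          _ ≤ |lam i|^2 := pow_le_pow_left₀ (abs_nonneg _) this 2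
          _ = (lam i)^2 := sq_abs _)
      hd0 hd1 hdsum
    exact le_trans h1 h2
  constructor
  · rw [hMfro, hPfro]
    exact (div_le_div_iff_of_pos_right hDpos).mpr hmain
  · intro hXU
    have heval : ∀ (i : Fin k) (j : Fin n), e i j = if j = Fin.castLE hk i then (1:ℝ) else 0 := by
      intro i j
      show (∑ r, U r j * X r i) = _
      have hXe : (∑ r, U r j * X r i) = ∑ r, U r j * U r (Fin.castLE hk i) :=
        Finset.sum_congr rfl fun r _ => by rw [hXU r i]
      rw [hXe]
      exact horthU j (Fin.castLE hk i)
    have haeq : ∀ i, a i = lam (Fin.castLE hk i) := by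
      intro i
      rw [halpha]
      rw [Finset.sum_congr rfl fun j (_ : j ∈ Finset.univ) => by rw [heval i j]]
      simp [Finset.sum_ite_eq']
    rw [hMfro, hPfro]
    congr 1
    exact Finset.sum_congr rfl fun i _ => by rw [haeq i]
end

section
/- Let M be a symmetric n×n matrix with eigenvalues |λ₁| ≥ … ≥ |λₙ|. Let X = [χ₁,…,χ_k] have orthonormal columns, let qᵢ = χᵢᵀMχᵢ be ordered so |q₁| ≥ … ≥ |q_k|, let H = ∑ᵢ qᵢχᵢχᵢᵀ be the projection of M onto H(X), and set s = ‖M - H‖_F/‖M‖_F and c = ‖H‖_F/‖M‖_F. Then ∑_{i=1}^k λᵢ² ≥ c² ∑_{i=1}^n λᵢ² + ∑_{i=1}^k (|λᵢ| - |qᵢ|)². -/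
open Matrix Finset

lemma abel_aux (w d : ℕ → ℝ) (hw : ∀ i j : ℕ, i ≤ j → w j ≤ w i) :
    ∀ K : ℕ, (∀ m, m ≤ K → 0 ≤ ∑ i ∈ Finset.range m, d i) →
      w K * ∑ i ∈ Finset.range K, d i ≤ ∑ i ∈ Finset.range K, w i * d i := by
  intro K
  induction K with
  | zero => simp
  | succ K ih =>
    intro hD
    have h1 := ih (fun m hm => hD m (hm.trans (Nat.le_succ K)))
    have hD1 := hD (K + 1) le_rfl
    rw [Finset.sum_range_succ] at hD1 ⊢
    rw [Finset.sum_range_succ]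
    nlinarith [mul_nonneg (sub_nonneg.mpr (hw K (K + 1) (Nat.le_succ K))) hD1, h1]

lemma sum_indicator (n m : ℕ) (hm : m ≤ n) :
    ∑ i : Fin n, (if (i : ℕ) < m then (1 : ℝ) else 0) = m := by
  rw [Fin.sum_univ_eq_sum_range (fun i => if i < m then (1 : ℝ) else 0) n]
  rw [← Finset.sum_subset (Finset.range_subset_range.mpr hm)
    (fun x _ hx => by simp [Finset.mem_range] at hx ⊢; omega)]
  rw [Finset.sum_congr rfl (fun x hx => if_pos (Finset.mem_range.mp hx))]
  simp

lemma sum_range_dite (k m : ℕ) (hm : m ≤ k) (f : Fin k → ℝ) :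
    ∑ i ∈ Finset.range m, (if h : i < k then f ⟨i, h⟩ else 0)
      = ∑ i : Fin k, (if (i : ℕ) < m then f i else 0) := by
  have h2 : ∑ i ∈ Finset.range m, (if h : i < k then f ⟨i, h⟩ else 0)
      = ∑ i ∈ Finset.range k,
          (fun j => if h : j < k then (if j < m then f ⟨j, h⟩ else 0) else 0) i := by
    rw [← Finset.sum_subset (Finset.range_subset_range.mpr hm)
      (fun x hx hxm => by
        simp only [Finset.mem_range] at hx hxm
        simp [dif_pos hx, if_neg hxm])]
    refine Finset.sum_congr rfl fun x hx => ?_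
    have hxm := Finset.mem_range.mp hx
    have hxk : x < k := lt_of_lt_of_le hxm hm
    simp [dif_pos hxk, if_pos hxm]
  rw [h2, ← Fin.sum_univ_eq_sum_range]
  refine Finset.sum_congr rfl fun i _ => ?_
  simp [i.isLt]

lemma threshold_lemma (n m : ℕ) (hm : m ≤ n) (a s : Fin n → ℝ)
    (hmono : ∀ i j : Fin n, i ≤ j → a j ≤ a i) (ha0 : ∀ i, 0 ≤ a i)
    (hs0 : ∀ j, 0 ≤ s j) (hs1 : ∀ j, s j ≤ 1) (hsum : ∑ j, s j ≤ (m : ℝ)) :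
    ∑ j, s j * a j ≤ ∑ j : Fin n, (if (j : ℕ) < m then a j else 0) := by
  rcases Nat.eq_zero_or_pos m with hm0 | hmpos
  · subst hm0
    have hz : ∀ j ∈ Finset.univ, s j = 0 := by
      rw [← Finset.sum_eq_zero_iff_of_nonneg (fun j _ => hs0 j)]
      exact le_antisymm (by simpa using hsum) (Finset.sum_nonneg fun j _ => hs0 j)
    simp only [Nat.not_lt_zero, if_false, Finset.sum_const_zero]
    calc ∑ j, s j * a j = ∑ j : Fin n, 0 := by
          refine Finset.sum_congr rfl fun j hj => by rw [hz j hj, zero_mul]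
      _ ≤ 0 := by simp
  · have hm1 : m - 1 < n := by omega
    set τ := a ⟨m - 1, hm1⟩ with hτ
    have key : ∀ j : Fin n,
        s j * a j - (if (j : ℕ) < m then a j else 0)
          ≤ (s j - if (j : ℕ) < m then 1 else 0) * τ := by
      intro j
      split_ifs with h
      · have hle : a ⟨m - 1, hm1⟩ ≤ a j := hmono j ⟨m - 1, hm1⟩ (by simp [Fin.le_def]; omega)
        nlinarith [hs1 j]
      · have hle : a j ≤ a ⟨m - 1, hm1⟩ := hmono ⟨m - 1, hm1⟩ j (by simp [Fin.le_def]; omega)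
        nlinarith [hs0 j]
    have hτ0 : 0 ≤ τ := ha0 _
    have h2 : ∑ j, (s j * a j - (if (j : ℕ) < m then a j else 0))
        ≤ ∑ j, (s j - if (j : ℕ) < m then 1 else 0) * τ :=
      Finset.sum_le_sum fun j _ => key j
    rw [Finset.sum_sub_distrib] at h2
    have h3 : ∑ j, (s j - if (j : ℕ) < m then 1 else 0) * τ
        = (∑ j, s j - (m : ℝ)) * τ := by
      rw [← Finset.sum_mul, Finset.sum_sub_distrib, sum_indicator n m hm]
    rw [h3] at h2
    nlinarith

lemma frob_eq_trace {n : ℕ} (A : Matrix (Fin n) (Fin n) ℝ) :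
    ∑ r, ∑ c, (A r c) ^ 2 = Matrix.trace (Aᵀ * A) := by
  simp only [Matrix.trace, Matrix.diag, Matrix.mul_apply, Matrix.transpose_apply, pow_two]
  rw [Finset.sum_comm]


/-- First claim of Theorem `sigma_approx`:
`∑_{i≤k} λᵢ² ≥ c² ∑ᵢ λᵢ² + ∑_{i≤k} (|λᵢ| - |qᵢ|)²`. -/
theorem sigma_approx_lower_bound
    (n k : ℕ) (hk : k ≤ n)
    (U : Matrix (Fin n) (Fin n) ℝ) (hU : Uᵀ * U = 1)
    (lam : Fin n → ℝ)
    (hmono : ∀ i j : Fin n, i ≤ j → |lam j| ≤ |lam i|)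
    (M : Matrix (Fin n) (Fin n) ℝ)
    (hM : M = U * Matrix.diagonal lam * Uᵀ) (hM0 : M ≠ 0)
    (X : Matrix (Fin n) (Fin k) ℝ) (hX : Xᵀ * X = 1)
    (q : Fin k → ℝ)
    (hq : ∀ i : Fin k, q i = (fun r => X r i) ⬝ᵥ (M *ᵥ fun r => X r i))
    (hqmono : ∀ i j : Fin k, i ≤ j → |q j| ≤ |q i|)
    (H : Matrix (Fin n) (Fin n) ℝ)
    (hH : H = ∑ i : Fin k, q i • vecMulVec (fun r => X r i) (fun r => X r i))
    (c : ℝ)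
    (hc : c = Real.sqrt (∑ r, ∑ c', (H r c') ^ 2) / Real.sqrt (∑ r, ∑ c', (M r c') ^ 2)) :
    ∑ j : Fin k, (lam (Fin.castLE hk j)) ^ 2 ≥
      c ^ 2 * ∑ i, (lam i) ^ 2 +
        ∑ j : Fin k, (|lam (Fin.castLE hk j)| - |q j|) ^ 2 := by
  have hUUt : U * Uᵀ = 1 := mul_eq_one_comm.mp hU
  have cancelU : ∀ Z : Matrix (Fin n) (Fin n) ℝ, Uᵀ * (U * Z) = Z := fun Z => by
    rw [← Matrix.mul_assoc, hU, one_mul]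
  set Y : Matrix (Fin n) (Fin k) ℝ := Uᵀ * X with hY
  -- fact A
  have hYtY : Yᵀ * Y = 1 := by
    rw [hY, Matrix.transpose_mul, Matrix.transpose_transpose, Matrix.mul_assoc,
      ← Matrix.mul_assoc U, hUUt, Matrix.one_mul, hX]
  -- fact B
  have hqmat : ∀ i, q i = (Xᵀ * M * X) i i := by
    intro i
    rw [hq]
    simp only [Matrix.mul_apply, dotProduct, Matrix.mulVec, Matrix.transpose_apply,
      Finset.sum_mul, Finset.mul_sum]
    rw [Finset.sum_comm]
    exact Finset.sum_congr rfl fun r _ => Finset.sum_congr rfl fun c' _ => by ring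
  -- fact C
  have hXMX : Xᵀ * M * X = Yᵀ * Matrix.diagonal lam * Y := by
    rw [hM, hY, Matrix.transpose_mul, Matrix.transpose_transpose]
    simp only [Matrix.mul_assoc]
  -- fact D
  have hqY : ∀ i, q i = ∑ j, lam j * (Y j i) ^ 2 := by
    intro i
    rw [hqmat i, hXMX]
    simp only [Matrix.mul_apply, Matrix.transpose_apply]
    refine Finset.sum_congr rfl fun j _ => ?_
    simp [Matrix.diagonal_apply, mul_ite, mul_zero, ite_mul, zero_mul,
      Finset.sum_ite_eq, Finset.sum_ite_eq']
    ring
  -- fact E : row sums of T equal 1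
  have hT1 : ∀ i : Fin k, ∑ j, (Y j i) ^ 2 = 1 := by
    intro i
    have : (Yᵀ * Y) i i = (1 : Matrix (Fin k) (Fin k) ℝ) i i := by rw [hYtY]
    simpa [Matrix.mul_apply, Matrix.one_apply, pow_two] using this
  -- fact F : column sums of T at most 1
  have hT2 : ∀ j : Fin n, ∑ i, (Y j i) ^ 2 ≤ 1 := by
    intro j
    set W : Matrix (Fin n) (Fin n) ℝ := (1 - X * Xᵀ) * U with hW
    have hP : (X * Xᵀ) * (X * Xᵀ) = X * Xᵀ := by
      rw [Matrix.mul_assoc, ← Matrix.mul_assoc Xᵀ, hX, Matrix.one_mul]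
    have hWtW : Wᵀ * W = 1 - Uᵀ * (X * Xᵀ) * U := by
      rw [hW, Matrix.transpose_mul, Matrix.transpose_sub, Matrix.transpose_one,
        Matrix.transpose_mul, Matrix.transpose_transpose]
      have h1 : (1 - X * Xᵀ) * ((1 - X * Xᵀ) * U) = (1 - X * Xᵀ) * U := by
        rw [← Matrix.mul_assoc]
        have : (1 - X * Xᵀ) * (1 - X * Xᵀ) = 1 - X * Xᵀ := by
          rw [Matrix.sub_mul, Matrix.mul_sub, Matrix.mul_sub, Matrix.one_mul,
            Matrix.mul_one, Matrix.one_mul, hP]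
          abel
        rw [this]
      rw [Matrix.mul_assoc, h1, Matrix.sub_mul, Matrix.one_mul, Matrix.mul_sub, hU,
        ← Matrix.mul_assoc]
    have hYYt : (Y * Yᵀ) j j = (Uᵀ * (X * Xᵀ) * U) j j := by
      rw [hY, Matrix.transpose_mul, Matrix.transpose_transpose]
      simp only [Matrix.mul_assoc]
    have hWnn : 0 ≤ (Wᵀ * W) j j := by
      simp only [Matrix.mul_apply, Matrix.transpose_apply]
      exact Finset.sum_nonneg fun r _ => mul_self_nonneg _
    rw [hWtW] at hWnn
    have h2 : ∑ i, (Y j i) ^ 2 = (Y * Yᵀ) j j := by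
      simp [Matrix.mul_apply, pow_two]
    have h3 : ((1 : Matrix (Fin n) (Fin n) ℝ) - Uᵀ * (X * Xᵀ) * U) j j
        = 1 - (Uᵀ * (X * Xᵀ) * U) j j := by
      simp [Matrix.sub_apply, Matrix.one_apply]
    rw [h3] at hWnn
    rw [h2, hYYt]
    linarith
  -- Frobenius norm of M
  have hMt : Mᵀ = M := by
    rw [hM]
    simp only [Matrix.transpose_mul, Matrix.transpose_transpose, Matrix.diagonal_transpose]
    simp only [Matrix.mul_assoc]
  have hMfrob : ∑ r, ∑ c', (M r c') ^ 2 = ∑ j, (lam j) ^ 2 := by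
    rw [frob_eq_trace, hMt]
    have hsq : M * M = U * (Matrix.diagonal lam * Matrix.diagonal lam) * Uᵀ := by
      rw [hM]
      simp only [Matrix.mul_assoc]
      rw [cancelU (Matrix.diagonal lam * Uᵀ)]
    rw [hsq, Matrix.diagonal_mul_diagonal]
    rw [Matrix.trace_mul_comm, ← Matrix.mul_assoc, hU, Matrix.one_mul, Matrix.trace_diagonal]
    exact Finset.sum_congr rfl fun j _ => (pow_two _).symm
  -- Frobenius norm of H
  have cancelX : ∀ Z : Matrix (Fin k) (Fin n) ℝ, Xᵀ * (X * Z) = Z := fun Z => by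
    rw [← Matrix.mul_assoc, hX, Matrix.one_mul]
  have hHmat : H = X * Matrix.diagonal q * Xᵀ := by
    rw [hH]
    ext r c'
    rw [Matrix.sum_apply]
    simp only [Matrix.smul_apply, Matrix.vecMulVec_apply, Matrix.mul_apply,
      Matrix.transpose_apply, Matrix.diagonal_apply, mul_ite, ite_mul, mul_zero, zero_mul,
      Finset.sum_ite_eq, Finset.sum_ite_eq', Finset.mem_univ, if_true, smul_eq_mul]
    exact Finset.sum_congr rfl fun i _ => by ring
  have hHt : Hᵀ = H := by
    rw [hHmat]
    simp only [Matrix.transpose_mul, Matrix.transpose_transpose, Matrix.diagonal_transpose]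
    simp only [Matrix.mul_assoc]
  have hHfrob : ∑ r, ∑ c', (H r c') ^ 2 = ∑ i, (q i) ^ 2 := by
    rw [frob_eq_trace, hHt]
    have hsq : H * H = X * (Matrix.diagonal q * Matrix.diagonal q) * Xᵀ := by
      rw [hHmat]
      simp only [Matrix.mul_assoc]
      rw [cancelX (Matrix.diagonal q * Xᵀ)]
    rw [hsq, Matrix.diagonal_mul_diagonal, Matrix.trace_mul_comm, ← Matrix.mul_assoc, hX,
      Matrix.one_mul, Matrix.trace_diagonal]
    exact Finset.sum_congr rfl fun j _ => (pow_two _).symm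

  -- positivity of the Frobenius norm of M
  have hMpos : 0 < ∑ r, ∑ c', (M r c') ^ 2 := by
    have hex : ∃ r c', M r c' ≠ 0 := by
      by_contra hcon
      push_neg at hcon
      exact hM0 (Matrix.ext fun r c' => by simpa using hcon r c')
    obtain ⟨r0, c0, h0⟩ := hex
    have h1 : 0 < (M r0 c0) ^ 2 := by positivity
    have h2 : (M r0 c0) ^ 2 ≤ ∑ c', (M r0 c') ^ 2 :=
      Finset.single_le_sum (f := fun c' => (M r0 c') ^ 2) (fun c' _ => sq_nonneg _)
        (Finset.mem_univ c0)
    have h3 : ∑ c', (M r0 c') ^ 2 ≤ ∑ r, ∑ c', (M r c') ^ 2 :=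
      Finset.single_le_sum (f := fun r => ∑ c', (M r c') ^ 2)
        (fun r _ => Finset.sum_nonneg fun c' _ => sq_nonneg _) (Finset.mem_univ r0)
    linarith
  -- the value of c²
  have hlampos : 0 < ∑ i, (lam i) ^ 2 := hMfrob ▸ hMpos
  have hc2 : c ^ 2 * ∑ i, (lam i) ^ 2 = ∑ i, (q i) ^ 2 := by
    have hcc : c ^ 2 = (∑ i, (q i) ^ 2) / (∑ i, (lam i) ^ 2) := by
      rw [hc, div_pow, Real.sq_sqrt (Finset.sum_nonneg fun r _ =>
          Finset.sum_nonneg fun c' _ => sq_nonneg (H r c')),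
        Real.sq_sqrt (Finset.sum_nonneg fun r _ =>
          Finset.sum_nonneg fun c' _ => sq_nonneg (M r c')), hHfrob, hMfrob]
    rw [hcc, div_mul_cancel₀ _ (ne_of_gt hlampos)]
  -- weak majorization
  have maj : ∀ m, m ≤ k →
      ∑ i ∈ Finset.range m, (if h : i < k then |q ⟨i, h⟩| else 0)
        ≤ ∑ i ∈ Finset.range m, (if h : i < n then |lam ⟨i, h⟩| else 0) := by
    intro m hm
    rw [sum_range_dite k m hm (fun i => |q i|),
      sum_range_dite n m (hm.trans hk) (fun j => |lam j|)]
    set s : Fin n → ℝ := fun j => ∑ i : Fin k, (if (i : ℕ) < m then (Y j i) ^ 2 else 0)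
      with hsdef
    have step1 : ∑ i : Fin k, (if (i : ℕ) < m then |q i| else 0)
        ≤ ∑ i : Fin k, (if (i : ℕ) < m then (∑ j, |lam j| * (Y j i) ^ 2) else 0) := by
      refine Finset.sum_le_sum fun i _ => ?_
      split_ifs
      · rw [hqY i]
        calc |∑ j, lam j * (Y j i) ^ 2| ≤ ∑ j, |lam j * (Y j i) ^ 2| :=
              Finset.abs_sum_le_sum_abs _ _
          _ = ∑ j, |lam j| * (Y j i) ^ 2 := Finset.sum_congr rfl fun j _ => by
              rw [abs_mul, abs_of_nonneg (sq_nonneg (Y j i))]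
      · exact le_refl 0
    have step2 : ∑ i : Fin k, (if (i : ℕ) < m then (∑ j, |lam j| * (Y j i) ^ 2) else 0)
        = ∑ j : Fin n, s j * |lam j| := by
      have hsw : ∀ i : Fin k, (if (i : ℕ) < m then (∑ j, |lam j| * (Y j i) ^ 2) else 0)
          = ∑ j, (if (i : ℕ) < m then |lam j| * (Y j i) ^ 2 else 0) := fun i => by
        split_ifs <;> simp
      rw [Finset.sum_congr rfl fun i _ => hsw i, Finset.sum_comm]
      refine Finset.sum_congr rfl fun j _ => ?_
      rw [hsdef, Finset.sum_mul]
      exact Finset.sum_congr rfl fun i _ => by split_ifs <;> ring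
    have hs0 : ∀ j, 0 ≤ s j :=
      fun j => Finset.sum_nonneg fun i _ => by split_ifs; exacts [sq_nonneg _, le_refl 0]
    have hs1 : ∀ j, s j ≤ 1 := by
      intro j
      calc s j ≤ ∑ i, (Y j i) ^ 2 :=
            Finset.sum_le_sum fun i _ => by split_ifs; exacts [le_refl _, sq_nonneg _]
        _ ≤ 1 := hT2 j
    have hsum : ∑ j, s j ≤ (m : ℝ) := by
      refine le_of_eq ?_
      rw [hsdef, Finset.sum_comm]
      have hin : ∀ i : Fin k, ∑ j, (if (i : ℕ) < m then (Y j i) ^ 2 else 0)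
          = if (i : ℕ) < m then (1 : ℝ) else 0 := by
        intro i
        by_cases h : (i : ℕ) < m
        · simp only [if_pos h]; exact hT1 i
        · simp [h]
      rw [Finset.sum_congr rfl fun i _ => hin i, sum_indicator k m hm]
    have hthr := threshold_lemma n m (hm.trans hk) (fun j => |lam j|) s
      hmono (fun i => abs_nonneg _) hs0 hs1 hsum
    calc ∑ i : Fin k, (if (i : ℕ) < m then |q i| else 0)
        ≤ ∑ j : Fin n, s j * |lam j| := step1.trans (le_of_eq step2)
      _ ≤ ∑ j : Fin n, (if (j : ℕ) < m then |lam j| else 0) := hthr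
  -- Abel summation
  have key : 0 ≤ ∑ i : Fin k, |q i| * (|lam (Fin.castLE hk i)| - |q i|) := by
    have hBmono : ∀ i j : ℕ, i ≤ j →
        (if h : j < k then |q ⟨j, h⟩| else 0) ≤ (if h : i < k then |q ⟨i, h⟩| else 0) := by
      intro i j hij
      by_cases hj : j < k
      · have hi : i < k := lt_of_le_of_lt hij hj
        rw [dif_pos hj, dif_pos hi]
        exact hqmono ⟨i, hi⟩ ⟨j, hj⟩ hij
      · rw [dif_neg hj]
        split_ifs; exacts [abs_nonneg _, le_refl 0]
    have hD : ∀ m, m ≤ k → 0 ≤ ∑ i ∈ Finset.range m,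
        ((if h : i < n then |lam ⟨i, h⟩| else 0) - (if h : i < k then |q ⟨i, h⟩| else 0)) := by
      intro m hm
      rw [Finset.sum_sub_distrib, sub_nonneg]
      exact maj m hm
    have habel := abel_aux (fun i => if h : i < k then |q ⟨i, h⟩| else 0)
      (fun i => (if h : i < n then |lam ⟨i, h⟩| else 0) - (if h : i < k then |q ⟨i, h⟩| else 0))
      hBmono k hD
    beta_reduce at habel
    have hwk : (if h : k < k then |q ⟨k, h⟩| else 0) = 0 := dif_neg (lt_irrefl k)
    rw [hwk, zero_mul] at habel
    calc (0 : ℝ) ≤ ∑ i ∈ Finset.range k,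
          (if h : i < k then |q ⟨i, h⟩| else 0) *
          ((if h : i < n then |lam ⟨i, h⟩| else 0) -
            (if h : i < k then |q ⟨i, h⟩| else 0)) := habel
      _ = ∑ i : Fin k, |q i| * (|lam (Fin.castLE hk i)| - |q i|) := by
          rw [← Fin.sum_univ_eq_sum_range]
          refine Finset.sum_congr rfl fun i _ => ?_
          have hik : (i : ℕ) < k := i.isLt
          have hin : (i : ℕ) < n := lt_of_lt_of_le hik hk
          simp only [dif_pos hik, dif_pos hin]
          rfl
  -- final assembly
  rw [ge_iff_le, hc2]
  have hterm : ∀ j : Fin k,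
      (q j) ^ 2 + (|lam (Fin.castLE hk j)| - |q j|) ^ 2
        = (lam (Fin.castLE hk j)) ^ 2 - 2 * (|q j| * (|lam (Fin.castLE hk j)| - |q j|)) := by
    intro j
    rw [← sq_abs (lam (Fin.castLE hk j)), ← sq_abs (q j)]
    ring
  have hsum1 : ∑ j : Fin k, (q j) ^ 2 + ∑ j : Fin k, (|lam (Fin.castLE hk j)| - |q j|) ^ 2
      = ∑ j : Fin k, (lam (Fin.castLE hk j)) ^ 2
        - 2 * ∑ j : Fin k, |q j| * (|lam (Fin.castLE hk j)| - |q j|) := by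
    rw [← Finset.sum_add_distrib, Finset.sum_congr rfl fun j _ => hterm j,
      Finset.sum_sub_distrib, Finset.mul_sum]
  linarith
end

section
/- In the setting above, there exists a k×k orthogonal matrix Z such that ‖U₁ − XZ‖_F ≤ (√2 ‖M‖_F/|λ_k|) · sin(M, H(X)). -/
open Matrix Finset

lemma dk_frob2_eq_trace {m p : ℕ} (A : Matrix (Fin m) (Fin p) ℝ) :
    ∑ r, ∑ c, (A r c)^2 = (Aᵀ * A).trace := by
  rw [Matrix.trace, Finset.sum_comm]
  simp [Matrix.diag, Matrix.mul_apply, sq]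

lemma dk_frob2_nonneg {m p : ℕ} (A : Matrix (Fin m) (Fin p) ℝ) :
    0 ≤ ∑ r, ∑ c, (A r c)^2 := by positivity

lemma dk_sym_idem_trace {m p : ℕ} (P : Matrix (Fin m) (Fin m) ℝ) (B : Matrix (Fin m) (Fin p) ℝ)
    (hPt : Pᵀ = P) (hP2 : P * P = P) :
    ((P*B)ᵀ * (P*B)).trace = (Bᵀ * (P * B)).trace := by
  rw [Matrix.transpose_mul, hPt, Matrix.mul_assoc, ← Matrix.mul_assoc P, hP2]

lemma dk_proj_frob2_le {m p : ℕ} (P : Matrix (Fin m) (Fin m) ℝ) (B : Matrix (Fin m) (Fin p) ℝ)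
    (hPt : Pᵀ = P) (hP2 : P * P = P) :
    ∑ r, ∑ c, ((P * B) r c)^2 ≤ ∑ r, ∑ c, (B r c)^2 := by
  have hQt : (1 - P)ᵀ = 1 - P := by rw [Matrix.transpose_sub, hPt, Matrix.transpose_one]
  have hQ2 : (1 - P) * (1 - P) = 1 - P := by
    simp [Matrix.mul_sub, Matrix.sub_mul, hP2]
  have h1 := dk_frob2_eq_trace (P * B)
  have h2 := dk_frob2_eq_trace ((1 - P) * B)
  have h3 := dk_frob2_eq_trace B
  have e1 := dk_sym_idem_trace P B hPt hP2
  have e2 := dk_sym_idem_trace (1 - P) B hQt hQ2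
  have hsplit : (Bᵀ * (P * B)).trace + (Bᵀ * ((1 - P) * B)).trace = (Bᵀ * B).trace := by
    rw [← Matrix.trace_add, ← Matrix.mul_add]
    congr 1
    rw [← Matrix.add_mul]
    simp
  nlinarith [dk_frob2_nonneg ((1 - P) * B)]

lemma dk_polar {k : ℕ} (A : Matrix (Fin k) (Fin k) ℝ)
    (hA : ∀ v : Fin k → ℝ, (A *ᵥ v) ⬝ᵥ (A *ᵥ v) ≤ v ⬝ᵥ v) :
    ∃ Z : Matrix (Fin k) (Fin k) ℝ, Zᵀ * Z = 1 ∧ (Aᵀ * A).trace ≤ (Zᵀ * A).trace := by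
  have hAT : Aᴴ = Aᵀ := conjTranspose_eq_transpose_of_trivial A
  set S : Matrix (Fin k) (Fin k) ℝ := Aᵀ * A with hSdef
  have hS : S.IsHermitian := by
    have := isHermitian_conjTranspose_mul_self A
    rwa [hAT] at this
  set d : Fin k → ℝ := hS.eigenvalues with hd
  set V : Matrix (Fin k) (Fin k) ℝ := (hS.eigenvectorUnitary : Matrix (Fin k) (Fin k) ℝ) with hV
  have hspec : S = V * diagonal d * Vᵀ := by
    have := hS.spectral_theorem
    simpa [hV, Function.comp, ← hAT, hd, star_eq_conjTranspose, conjTranspose_eq_transpose_of_trivial] using this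
  have hVtV : Vᵀ * V = 1 := by
    have := Matrix.mem_unitaryGroup_iff'.mp hS.eigenvectorUnitary.2
    simpa [hV, star_eq_conjTranspose, hAT, conjTranspose_eq_transpose_of_trivial] using this
  have hVVt : V * Vᵀ = 1 := by
    have := Matrix.mem_unitaryGroup_iff.mp hS.eigenvectorUnitary.2
    simpa [hV, star_eq_conjTranspose, conjTranspose_eq_transpose_of_trivial] using this
  have hd0 : ∀ i, 0 ≤ d i := by
    intro i
    have := Matrix.eigenvalues_conjTranspose_mul_self_nonneg A i
    convert this using 2 <;> rw [hAT]
  -- dot products of A applied to columns of V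
  have hdot : ∀ x y : Fin k → ℝ, (A *ᵥ x) ⬝ᵥ (A *ᵥ y) = x ⬝ᵥ (S *ᵥ y) := by
    intro x y
    rw [hSdef, ← Matrix.mulVec_mulVec, Matrix.dotProduct_mulVec x, Matrix.vecMul_transpose]
  have hSV : S * V = V * diagonal d := by
    rw [hspec, Matrix.mul_assoc, Matrix.mul_assoc, hVtV, Matrix.mul_one]
  have hScol : ∀ i, S *ᵥ (fun t => V t i) = fun r => d i * V r i := by
    intro i
    funext r
    have := congrFun (congrFun hSV r) i
    simpa [Matrix.mul_apply, Matrix.mulVec, dotProduct, Matrix.diagonal, mul_comm,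
      Finset.sum_ite_eq, Finset.mem_univ] using this
  have hvv : ∀ i j, (fun t => V t i) ⬝ᵥ (fun t => V t j) = if i = j then (1:ℝ) else 0 := by
    intro i j
    have := congrFun (congrFun hVtV i) j
    simpa [Matrix.mul_apply, dotProduct, Matrix.transpose_apply, Matrix.one_apply] using this
  have hAcol : ∀ i j, (A *ᵥ fun t => V t i) ⬝ᵥ (A *ᵥ fun t => V t j)
      = d j * (if i = j then (1:ℝ) else 0) := by
    intro i j
    rw [hdot, hScol]
    have : (fun t => V t i) ⬝ᵥ (fun r => d j * V r j) = d j * ((fun t => V t i) ⬝ᵥ fun t => V t j) := by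
      simp only [dotProduct, Finset.mul_sum]
      exact Finset.sum_congr rfl fun t _ => by ring
    rw [this, hvv]
  have hd1 : ∀ i, d i ≤ 1 := by
    intro i
    have h1 := hAcol i i
    have h2 := hA (fun t => V t i)
    have h3 := hvv i i
    simp only [if_pos rfl, mul_one] at h1 h3
    rw [h3] at h2
    simpa [h1] using h2
  classical
  set f : Fin k → EuclideanSpace ℝ (Fin k) :=
    (fun i => WithLp.toLp 2 (fun r => (Real.sqrt (d i))⁻¹ * (A *ᵥ fun t => V t i) r)) with hf
  have hortho : Orthonormal ℝ (Set.restrict {i | d i ≠ 0} f) := by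
    rw [orthonormal_iff_ite]
    rintro ⟨i, hi⟩ ⟨j, hj⟩
    have hinner : (inner ℝ (f i) (f j) : ℝ)
        = (Real.sqrt (d i))⁻¹ * (Real.sqrt (d j))⁻¹
          * ((A *ᵥ fun t => V t i) ⬝ᵥ (A *ᵥ fun t => V t j)) := by
      simp only [hf, PiLp.inner_apply, WithLp.ofLp_toLp, RCLike.inner_apply, starRingEnd_apply, star_trivial,
        dotProduct, Finset.mul_sum]
      exact Finset.sum_congr rfl fun t _ => by ring
    have hsi : Real.sqrt (d i) ≠ 0 :=
      Real.sqrt_ne_zero'.mpr (lt_of_le_of_ne (hd0 i) (Ne.symm hi))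
    have hsj : Real.sqrt (d j) ≠ 0 :=
      Real.sqrt_ne_zero'.mpr (lt_of_le_of_ne (hd0 j) (Ne.symm hj))
    show (inner ℝ (f i) (f j) : ℝ) = _
    rw [hinner, hAcol i j]
    by_cases hij : i = j
    · subst hij
      simp only [if_pos rfl, mul_one, Subtype.mk_eq_mk]
      have : Real.sqrt (d i) * Real.sqrt (d i) = d i := Real.mul_self_sqrt (hd0 i)
      field_simp
      linarith [this]
    · have : (⟨i, hi⟩ : {i | d i ≠ 0}) ≠ ⟨j, hj⟩ := by simpa using hij
      simp [hij, this]
  obtain ⟨b, hb⟩ := hortho.exists_orthonormalBasis_extension_of_card_eq (by simp)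
  set W : Matrix (Fin k) (Fin k) ℝ := Matrix.of (fun r c => b c r) with hW
  have hWtW : Wᵀ * W = 1 := by
    ext i j
    have hON := b.orthonormal
    rw [orthonormal_iff_ite] at hON
    have h := hON i j
    simp only [PiLp.inner_apply, RCLike.inner_apply, starRingEnd_apply, star_trivial] at h
    simpa [Matrix.mul_apply, hW, Matrix.one_apply, Matrix.transpose_apply, mul_comm] using h
  have hAcol0 : ∀ i, d i = 0 → (A *ᵥ fun t => V t i) = 0 := by
    intro i hdi
    have h := hAcol i i
    rw [hdi] at h
    exact dotProduct_self_eq_zero.mp (by simpa using h)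
  have hAv : ∀ i, (A *ᵥ fun t => V t i) = fun r => Real.sqrt (d i) * W r i := by
    intro i
    by_cases hdi : d i = 0
    · rw [hAcol0 i hdi]; funext r; simp [hdi]
    · have hbi : b i = f i := hb i hdi
      funext r
      have hWri : W r i = (Real.sqrt (d i))⁻¹ * (A *ᵥ fun t => V t i) r := by
        rw [hW]
        simp only [Matrix.of_apply]
        rw [hbi]
      rw [hWri]
      have hsne : Real.sqrt (d i) ≠ 0 :=
        Real.sqrt_ne_zero'.mpr (lt_of_le_of_ne (hd0 i) (Ne.symm hdi))
      field_simp
  have hAV : A * V = W * diagonal (fun i => Real.sqrt (d i)) := by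
    ext r i
    have h := congrFun (hAv i) r
    simp only [Matrix.mulVec, dotProduct] at h
    simp only [Matrix.mul_apply, Matrix.diagonal_apply, mul_ite, mul_zero,
      Finset.sum_ite_eq', Finset.mem_univ, if_true]
    rw [h]; ring
  have hAeq : A = W * diagonal (fun i => Real.sqrt (d i)) * Vᵀ := by
    calc A = A * (V * Vᵀ) := by rw [hVVt, Matrix.mul_one]
    _ = (A * V) * Vᵀ := by rw [Matrix.mul_assoc]
    _ = _ := by rw [hAV]
  refine ⟨W * Vᵀ, ?_, ?_⟩
  · rw [Matrix.transpose_mul, Matrix.transpose_transpose, Matrix.mul_assoc,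
      ← Matrix.mul_assoc Wᵀ, hWtW, Matrix.one_mul, hVVt]
  · have hZA : (W * Vᵀ)ᵀ * A = V * diagonal (fun i => Real.sqrt (d i)) * Vᵀ := by
      rw [hAeq, Matrix.transpose_mul, Matrix.transpose_transpose]
      simp only [Matrix.mul_assoc]
      rw [← Matrix.mul_assoc Wᵀ W, hWtW, Matrix.one_mul]
    have htr1 : ((W * Vᵀ)ᵀ * A).trace = ∑ i, Real.sqrt (d i) := by
      rw [hZA, Matrix.trace_mul_comm, ← Matrix.mul_assoc, hVtV, Matrix.one_mul,
        Matrix.trace_diagonal]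
    have htr2 : (Aᵀ * A).trace = ∑ i, d i := by
      rw [← hSdef, hspec, Matrix.trace_mul_comm, ← Matrix.mul_assoc, hVtV, Matrix.one_mul,
        Matrix.trace_diagonal]
    rw [htr1, htr2]
    apply Finset.sum_le_sum
    intro i _
    nlinarith [Real.sq_sqrt (hd0 i), Real.sqrt_nonneg (d i), hd1 i, hd0 i]

lemma dk_dot_mul {m p : ℕ} (B : Matrix (Fin m) (Fin p) ℝ) (x y : Fin p → ℝ) :
    (B *ᵥ x) ⬝ᵥ (B *ᵥ y) = x ⬝ᵥ ((Bᵀ * B) *ᵥ y) := by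
  rw [← Matrix.mulVec_mulVec, Matrix.dotProduct_mulVec x, Matrix.vecMul_transpose]

lemma dk_dot_self_nonneg {p : ℕ} (v : Fin p → ℝ) : 0 ≤ v ⬝ᵥ v := by
  exact Finset.sum_nonneg fun i _ => mul_self_nonneg _

lemma dk_right_mul {n k : ℕ} (hk : k ≤ n) (U : Matrix (Fin n) (Fin n) ℝ)
    (hUUt : U * Uᵀ = 1) (U1 : Matrix (Fin n) (Fin k) ℝ)
    (hU1 : ∀ (i : Fin n) (j : Fin k), U1 i j = U i (Fin.castLE hk j))
    (B : Matrix (Fin n) (Fin n) ℝ) :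
    ∑ r, ∑ c, ((B * U1) r c)^2 ≤ ∑ r, ∑ c, (B r c)^2 := by
  classical
  set colF : Fin n → ℝ := fun j => ∑ r, ((B * U) r j)^2 with hcolF
  have hentry : ∀ (r : Fin n) (c : Fin k), (B * U1) r c = (B * U) r (Fin.castLE hk c) := by
    intro r c
    simp only [Matrix.mul_apply]
    exact Finset.sum_congr rfl fun j _ => by rw [hU1]
  have h1 : ∑ r, ∑ c, ((B * U1) r c)^2 = ∑ c : Fin k, colF (Fin.castLE hk c) := by
    rw [Finset.sum_comm]
    exact Finset.sum_congr rfl fun c _ => Finset.sum_congr rfl fun r _ => by rw [hentry]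
  have h2 : ∑ c : Fin k, colF (Fin.castLE hk c)
      = ∑ j ∈ Finset.univ.image (Fin.castLE hk), colF j :=
    (Finset.sum_image (fun a _ b _ h => Fin.castLE_injective hk h)).symm
  have h3 : ∑ j ∈ Finset.univ.image (Fin.castLE hk), colF j ≤ ∑ j : Fin n, colF j :=
    Finset.sum_le_sum_of_subset_of_nonneg (Finset.subset_univ _)
      (fun j _ _ => Finset.sum_nonneg fun r _ => sq_nonneg _)
  have h4 : ∑ j : Fin n, colF j = ∑ r, ∑ c, (B r c)^2 := by
    have e1 : ∑ j : Fin n, colF j = ∑ r, ∑ j, ((B * U) r j)^2 := Finset.sum_comm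
    have e2 : (∑ r, ∑ j, ((B * U) r j)^2) = ((B * U)ᵀ * (B * U)).trace :=
      dk_frob2_eq_trace (B * U)
    have e3 : ((B * U)ᵀ * (B * U)).trace = (Bᵀ * B).trace := by
      rw [Matrix.transpose_mul, Matrix.trace_mul_comm]
      have heq : (B * U) * (Uᵀ * Bᵀ) = B * Bᵀ := by
        calc (B * U) * (Uᵀ * Bᵀ) = B * ((U * Uᵀ) * Bᵀ) := by simp only [Matrix.mul_assoc]
        _ = B * Bᵀ := by rw [hUUt, Matrix.one_mul]
      rw [heq, Matrix.trace_mul_comm]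
    rw [e1, e2, e3, ← dk_frob2_eq_trace]
  calc ∑ r, ∑ c, ((B * U1) r c)^2 = ∑ c : Fin k, colF (Fin.castLE hk c) := h1
  _ = _ := h2
  _ ≤ ∑ j : Fin n, colF j := h3
  _ = _ := h4

set_option maxHeartbeats 1000000 in
/-- Davis–Kahan style corollary: there is an orthogonal `Z` with
`‖U₁ − XZ‖_F ≤ √2 ‖M‖_F sin(M,H(X)) / |λₖ|`. -/
theorem eigenvector_basis_approx
    (n k : ℕ) (hk0 : 0 < k) (hk : k ≤ n)
    (U : Matrix (Fin n) (Fin n) ℝ) (hU : Uᵀ * U = 1)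
    (lam : Fin n → ℝ)
    (hmono : ∀ i j : Fin n, i ≤ j → |lam j| ≤ |lam i|)
    (M : Matrix (Fin n) (Fin n) ℝ)
    (hM : M = U * Matrix.diagonal lam * Uᵀ)
    (lamk : ℝ) (hlamk : lamk = lam ⟨k - 1, by omega⟩) (hlamk0 : lamk ≠ 0)
    (U1 : Matrix (Fin n) (Fin k) ℝ)
    (hU1 : ∀ (i : Fin n) (j : Fin k), U1 i j = U i (Fin.castLE hk j))
    (X : Matrix (Fin n) (Fin k) ℝ) (hX : Xᵀ * X = 1)
    (q : Fin k → ℝ)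
    (hq : ∀ i : Fin k, q i = (fun r => X r i) ⬝ᵥ (M *ᵥ fun r => X r i))
    (H : Matrix (Fin n) (Fin n) ℝ)
    (hH : H = ∑ i : Fin k, q i • vecMulVec (fun r => X r i) (fun r => X r i))
    (s : ℝ)
    (hs : s = Real.sqrt (∑ r, ∑ c, (M r c - H r c) ^ 2) /
              Real.sqrt (∑ r, ∑ c, (M r c) ^ 2)) :
    ∃ Z : Matrix (Fin k) (Fin k) ℝ, Zᵀ * Z = 1 ∧
      Real.sqrt (∑ r, ∑ c, (U1 r c - (X * Z) r c) ^ 2) ≤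
        Real.sqrt 2 * Real.sqrt (∑ r, ∑ c, (M r c) ^ 2) / |lamk| * s := by
  classical
  have hUUt : U * Uᵀ = 1 := mul_eq_one_comm.mp hU
  -- U1 has orthonormal columns
  have hU1o : U1ᵀ * U1 = 1 := by
    ext i j
    have h := congrFun (congrFun hU (Fin.castLE hk i)) (Fin.castLE hk j)
    simp only [Matrix.mul_apply, Matrix.transpose_apply, Matrix.one_apply] at h ⊢
    have e : ∑ x, U1 x i * U1 x j = ∑ x, U x (Fin.castLE hk i) * U x (Fin.castLE hk j) :=
      Finset.sum_congr rfl fun x _ => by rw [hU1, hU1]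
    rw [e, h]
    by_cases hij : i = j
    · simp [hij]
    · have : Fin.castLE hk i ≠ Fin.castLE hk j := fun hc => hij (Fin.castLE_injective hk hc)
      simp [hij, this]
  -- the projection P
  set P : Matrix (Fin n) (Fin n) ℝ := 1 - X * Xᵀ with hP
  have hPt : Pᵀ = P := by
    rw [hP, Matrix.transpose_sub, Matrix.transpose_one, Matrix.transpose_mul,
      Matrix.transpose_transpose]
  have hXXX : (X * Xᵀ) * (X * Xᵀ) = X * Xᵀ := by
    calc (X * Xᵀ) * (X * Xᵀ) = X * ((Xᵀ * X) * Xᵀ) := by simp only [Matrix.mul_assoc]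
    _ = X * Xᵀ := by rw [hX, Matrix.one_mul]
  have hP2 : P * P = P := by
    rw [hP]
    rw [Matrix.mul_sub, Matrix.sub_mul, Matrix.sub_mul, hXXX]
    simp only [Matrix.one_mul, Matrix.mul_one]
    abel
  -- H in matrix form, and P * H = 0
  have hH' : H = X * Matrix.diagonal q * Xᵀ := by
    rw [hH]
    ext r c
    simp only [Matrix.sum_apply, Matrix.smul_apply, Matrix.vecMulVec_apply, smul_eq_mul,
      Matrix.mul_apply, Matrix.transpose_apply, Matrix.diagonal_apply, mul_ite, mul_zero,
      ite_mul, zero_mul, Finset.sum_ite_eq', Finset.mem_univ, if_true]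
    exact Finset.sum_congr rfl fun i _ => by ring
  have hPH : P * H = 0 := by
    rw [hH', hP, Matrix.sub_mul, Matrix.one_mul]
    have e : (X * Xᵀ) * (X * Matrix.diagonal q * Xᵀ) = X * Matrix.diagonal q * Xᵀ := by
      calc (X * Xᵀ) * (X * Matrix.diagonal q * Xᵀ)
          = X * ((Xᵀ * X) * (Matrix.diagonal q * Xᵀ)) := by simp only [Matrix.mul_assoc]
      _ = X * Matrix.diagonal q * Xᵀ := by rw [hX, Matrix.one_mul, Matrix.mul_assoc]
    rw [e, sub_self]
  -- eigen-equation for U1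
  have hMU : M * U = U * Matrix.diagonal lam := by
    rw [hM, Matrix.mul_assoc (U * Matrix.diagonal lam) Uᵀ U, hU, Matrix.mul_one]
  have hMU1 : M * U1 = U1 * Matrix.diagonal (fun c => lam (Fin.castLE hk c)) := by
    ext r c
    have h := congrFun (congrFun hMU r) (Fin.castLE hk c)
    simp only [Matrix.mul_apply, Matrix.diagonal_apply, mul_ite, mul_zero,
      Finset.sum_ite_eq', Finset.mem_univ, if_true] at h ⊢
    calc ∑ j, M r j * U1 j c = ∑ j, M r j * U j (Fin.castLE hk c) :=
          Finset.sum_congr rfl fun j _ => by rw [hU1]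
    _ = U r (Fin.castLE hk c) * lam (Fin.castLE hk c) := h
    _ = U1 r c * lam (Fin.castLE hk c) := by rw [hU1]
  -- the contraction property of A = Xᵀ * U1
  have hAball : ∀ v : Fin k → ℝ,
      ((Xᵀ * U1) *ᵥ v) ⬝ᵥ ((Xᵀ * U1) *ᵥ v) ≤ v ⬝ᵥ v := by
    intro v
    have e1 : (Xᵀ * U1) *ᵥ v = Xᵀ *ᵥ (U1 *ᵥ v) := (Matrix.mulVec_mulVec _ _ _).symm
    set w : Fin n → ℝ := U1 *ᵥ v with hw
    have e2 : (Xᵀ *ᵥ w) ⬝ᵥ (Xᵀ *ᵥ w) = w ⬝ᵥ ((X * Xᵀ) *ᵥ w) := by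
      have := dk_dot_mul Xᵀ w w
      rwa [Matrix.transpose_transpose] at this
    have e3 : 0 ≤ w ⬝ᵥ (P *ᵥ w) := by
      have := dk_dot_mul P w w
      rw [hPt, hP2] at this
      rw [← this]
      exact dk_dot_self_nonneg _
    have e4 : w ⬝ᵥ (P *ᵥ w) = w ⬝ᵥ w - w ⬝ᵥ ((X * Xᵀ) *ᵥ w) := by
      rw [hP, Matrix.sub_mulVec, Matrix.one_mulVec, dotProduct_sub]
    have e5 : w ⬝ᵥ w = v ⬝ᵥ v := by
      rw [hw, dk_dot_mul, hU1o, Matrix.one_mulVec]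
    rw [e1, e2]
    rw [e4] at e3
    linarith [e3, e5.symm.le, e5.le]
  obtain ⟨Z, hZ, hZtr⟩ := dk_polar (Xᵀ * U1) hAball
  refine ⟨Z, hZ, ?_⟩
  -- abbreviations
  set FU : ℝ := ∑ r, ∑ c, (U1 r c - (X * Z) r c) ^ 2 with hFU
  set FH : ℝ := ∑ r, ∑ c, (M r c - H r c) ^ 2 with hFH
  set FM : ℝ := ∑ r, ∑ c, (M r c) ^ 2 with hFM
  -- Step 1: FU = 2k - 2 tr(Zᵀ (Xᵀ U1))
  have hexp : (U1 - X * Z)ᵀ * (U1 - X * Z)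
      = U1ᵀ * U1 - U1ᵀ * (X * Z) - (X * Z)ᵀ * U1 + (X * Z)ᵀ * (X * Z) := by
    rw [Matrix.transpose_sub, Matrix.sub_mul, Matrix.mul_sub, Matrix.mul_sub]
    abel
  have ht1 : (U1ᵀ * U1).trace = (k : ℝ) := by
    rw [hU1o, Matrix.trace_one]
    simp
  have ht2 : ((X * Z)ᵀ * (X * Z)).trace = (k : ℝ) := by
    have e : (X * Z)ᵀ * (X * Z) = Zᵀ * (Xᵀ * X) * Z := by
      rw [Matrix.transpose_mul]
      simp only [Matrix.mul_assoc]
    rw [e, hX, Matrix.mul_one, hZ, Matrix.trace_one]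
    simp
  have ht3 : (U1ᵀ * (X * Z)).trace = (Zᵀ * (Xᵀ * U1)).trace := by
    rw [← Matrix.trace_transpose (U1ᵀ * (X * Z))]
    congr 1
    rw [Matrix.transpose_mul, Matrix.transpose_transpose, Matrix.transpose_mul]
    simp only [Matrix.mul_assoc]
  have ht4 : ((X * Z)ᵀ * U1).trace = (Zᵀ * (Xᵀ * U1)).trace := by
    rw [Matrix.transpose_mul]
    simp only [Matrix.mul_assoc]
  have hF1 : FU = 2 * (k : ℝ) - 2 * (Zᵀ * (Xᵀ * U1)).trace := by
    have e0 : FU = ∑ r, ∑ c, ((U1 - X * Z) r c) ^ 2 := by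
      rw [hFU]
      exact Finset.sum_congr rfl fun r _ => Finset.sum_congr rfl fun c _ => by
        rw [Matrix.sub_apply]
    rw [e0, dk_frob2_eq_trace, hexp, Matrix.trace_add, Matrix.trace_sub, Matrix.trace_sub,
      ht1, ht2, ht3, ht4]
    ring
  -- Step 2: trace bound from the polar lemma
  have hF2 : FU ≤ 2 * ((k : ℝ) - ((Xᵀ * U1)ᵀ * (Xᵀ * U1)).trace) := by
    rw [hF1]; linarith [hZtr]
  -- Step 3: k - tr(AᵀA) = ‖P U1‖²
  have hF3 : (k : ℝ) - ((Xᵀ * U1)ᵀ * (Xᵀ * U1)).trace = ∑ r, ∑ c, ((P * U1) r c) ^ 2 := by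
    have e1 : ∑ r, ∑ c, ((P * U1) r c) ^ 2 = (U1ᵀ * (P * U1)).trace := by
      rw [dk_frob2_eq_trace, dk_sym_idem_trace P U1 hPt hP2]
    have e2 : U1ᵀ * (P * U1) = U1ᵀ * U1 - (Xᵀ * U1)ᵀ * (Xᵀ * U1) := by
      rw [hP, Matrix.sub_mul, Matrix.one_mul, Matrix.mul_sub]
      congr 1
      rw [Matrix.transpose_mul, Matrix.transpose_transpose]
      simp only [Matrix.mul_assoc]
    rw [e1, e2, Matrix.trace_sub, ht1]
  -- Step 4: lamk² ‖P U1‖² ≤ ‖(P U1) diag(lam)‖²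
  have hF4 : lamk ^ 2 * (∑ r, ∑ c, ((P * U1) r c) ^ 2)
      ≤ ∑ r, ∑ c, (((P * U1) * Matrix.diagonal (fun c => lam (Fin.castLE hk c))) r c) ^ 2 := by
    rw [Finset.mul_sum]
    apply Finset.sum_le_sum
    intro r _
    rw [Finset.mul_sum]
    apply Finset.sum_le_sum
    intro c _
    have hent : ((P * U1) * Matrix.diagonal (fun c => lam (Fin.castLE hk c))) r c
        = (P * U1) r c * lam (Fin.castLE hk c) := Matrix.mul_diagonal _ _ _ _
    have hge : lamk ^ 2 ≤ (lam (Fin.castLE hk c)) ^ 2 := by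
      have hle : (Fin.castLE hk c : Fin n) ≤ ⟨k - 1, by omega⟩ := by
        have : (c : ℕ) < k := c.isLt
        simp only [Fin.le_def, Fin.coe_castLE]
        omega
      have habs := hmono (Fin.castLE hk c) ⟨k - 1, by omega⟩ hle
      rw [hlamk, ← sq_abs (lam ⟨k - 1, by omega⟩), ← sq_abs (lam (Fin.castLE hk c))]
      exact pow_le_pow_left₀ (abs_nonneg _) habs 2
    rw [hent, mul_pow]
    nlinarith [sq_nonneg ((P * U1) r c)]
  -- Step 5: (P U1) diag = P (M - H) U1
  have h5 : (P * (M - H)) * U1 = (P * U1) * Matrix.diagonal (fun c => lam (Fin.castLE hk c)) := by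
    rw [Matrix.mul_sub, hPH, sub_zero, Matrix.mul_assoc, hMU1, ← Matrix.mul_assoc]
  -- Step 6: ‖P(M-H) U1‖² ≤ ‖P(M-H)‖²
  have h6 : ∑ r, ∑ c, (((P * (M - H)) * U1) r c) ^ 2 ≤ ∑ r, ∑ c, ((P * (M - H)) r c) ^ 2 :=
    dk_right_mul hk U hUUt U1 hU1 (P * (M - H))
  -- Step 7: ‖P(M-H)‖² ≤ ‖M-H‖² = FH
  have h7 : ∑ r, ∑ c, ((P * (M - H)) r c) ^ 2 ≤ FH := by
    have := dk_proj_frob2_le P (M - H) hPt hP2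
    have e : ∑ r, ∑ c, ((M - H) r c) ^ 2 = FH := by
      rw [hFH]
      exact Finset.sum_congr rfl fun r _ => Finset.sum_congr rfl fun c _ => by
        rw [Matrix.sub_apply]
    linarith [this, e.le, e.ge]
  -- combine: FU * lamk² ≤ 2 FH
  have hmain : FU * lamk ^ 2 ≤ 2 * FH := by
    have h45 : lamk ^ 2 * (∑ r, ∑ c, ((P * U1) r c) ^ 2)
        ≤ ∑ r, ∑ c, (((P * (M - H)) * U1) r c) ^ 2 := by
      rw [h5]; exact hF4
    nlinarith [hF2, hF3, h45, h6, h7, sq_nonneg lamk,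
      dk_frob2_nonneg (P * U1)]
  -- positivity of FM
  have hMt : Mᵀ = M := by
    rw [hM, Matrix.transpose_mul, Matrix.transpose_mul, Matrix.transpose_transpose,
      Matrix.diagonal_transpose, Matrix.mul_assoc]
  have hFMval : FM = ∑ i, lam i * lam i := by
    rw [hFM, dk_frob2_eq_trace M, hMt]
    have e : M * M = U * (Matrix.diagonal lam * Matrix.diagonal lam) * Uᵀ := by
      rw [hM]
      calc (U * Matrix.diagonal lam * Uᵀ) * (U * Matrix.diagonal lam * Uᵀ)
          = U * (Matrix.diagonal lam * ((Uᵀ * U) * (Matrix.diagonal lam * Uᵀ))) := by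
            simp only [Matrix.mul_assoc]
      _ = U * (Matrix.diagonal lam * Matrix.diagonal lam) * Uᵀ := by
            rw [hU, Matrix.one_mul]
            simp only [Matrix.mul_assoc]
    rw [e, Matrix.trace_mul_comm, ← Matrix.mul_assoc, hU, Matrix.one_mul,
      Matrix.diagonal_mul_diagonal, Matrix.trace_diagonal]
  have hFMpos : 0 < FM := by
    rw [hFMval]
    have hsingle : lam ⟨k - 1, by omega⟩ * lam ⟨k - 1, by omega⟩ ≤ ∑ i, lam i * lam i :=
      Finset.single_le_sum (fun i _ => mul_self_nonneg (lam i)) (Finset.mem_univ _)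
    have : 0 < lam ⟨k - 1, by omega⟩ * lam ⟨k - 1, by omega⟩ := by
      rw [← hlamk]
      exact mul_self_pos.mpr hlamk0
    linarith
  have hFHnn : 0 ≤ FH := by
    rw [hFH]
    exact Finset.sum_nonneg fun r _ => Finset.sum_nonneg fun c _ => sq_nonneg _
  have hFUnn : 0 ≤ FU := by
    rw [hFU]
    exact Finset.sum_nonneg fun r _ => Finset.sum_nonneg fun c _ => sq_nonneg _
  -- final square-root manipulation
  have hlamkpos : 0 < lamk ^ 2 := by positivity
  have hFUle : FU ≤ 2 * FH / lamk ^ 2 := (le_div_iff₀ hlamkpos).mpr hmain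
  have hsqrtFM : Real.sqrt FM ≠ 0 := by
    have := Real.sqrt_pos.mpr hFMpos
    linarith
  have habs : |lamk| ≠ 0 := abs_ne_zero.mpr hlamk0
  have hrhs : Real.sqrt 2 * Real.sqrt FM / |lamk| * s = Real.sqrt 2 * Real.sqrt FH / |lamk| := by
    rw [hs]
    field_simp
  rw [hrhs]
  calc Real.sqrt FU ≤ Real.sqrt (2 * FH / lamk ^ 2) := Real.sqrt_le_sqrt hFUle
  _ = Real.sqrt 2 * Real.sqrt FH / |lamk| := by
      rw [Real.sqrt_div (by positivity) (lamk ^ 2), Real.sqrt_mul (by norm_num) FH,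
        Real.sqrt_sq_eq_abs]
end

section
/- For n×k matrices U₁, X with orthonormal columns and X_⊥ completing X to an orthogonal n×n matrix [X, X_⊥], one has min_{Z orthogonal k×k} ‖U₁ − XZ‖_F ≤ √2 ‖X_⊥ᵀU₁‖_F. -/
open Matrix Finset

attribute [local instance] Matrix.normedAddCommGroup Matrix.normedSpace

lemma exists_max_orth (k : ℕ) (A : Matrix (Fin k) (Fin k) ℝ) :
    ∃ Z : Matrix (Fin k) (Fin k) ℝ, Zᵀ * Z = 1 ∧
      ∀ W : Matrix (Fin k) (Fin k) ℝ, Wᵀ * W = 1 → (Wᵀ * A).trace ≤ (Zᵀ * A).trace := by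
  set S : Set (Matrix (Fin k) (Fin k) ℝ) := {Z | Zᵀ * Z = 1} with hS
  have hconts : Continuous fun Z : Matrix (Fin k) (Fin k) ℝ => Zᵀ * Z :=
    (continuous_id.matrix_transpose).matrix_mul continuous_id
  have hclosed : IsClosed S := isClosed_singleton.preimage hconts
  have hsub : S ⊆ Metric.closedBall 0 1 := by
    intro Z hZ
    rw [Metric.mem_closedBall, dist_zero_right]
    rw [Matrix.norm_le_iff (by norm_num)]
    intro i j
    have h1 : ∑ l, Z l j * Z l j = 1 := by
      have := congrFun (congrFun hZ j) j
      simpa [Matrix.mul_apply, Matrix.one_apply] using this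
    have h2 : Z i j * Z i j ≤ 1 := by
      rw [← h1]
      exact Finset.single_le_sum (fun l _ => mul_self_nonneg (Z l j)) (Finset.mem_univ i)
    rw [Real.norm_eq_abs]
    nlinarith [abs_nonneg (Z i j), sq_abs (Z i j)]
  have hcompact : IsCompact S :=
    Metric.isCompact_of_isClosed_isBounded hclosed (Metric.isBounded_closedBall.subset hsub)
  have hne : S.Nonempty := ⟨1, by simp [hS]⟩
  have hf : ContinuousOn (fun Z : Matrix (Fin k) (Fin k) ℝ => (Zᵀ * A).trace) S :=
    (((continuous_id.matrix_transpose).matrix_mul continuous_const).matrix_trace).continuousOn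
  obtain ⟨Z, hZ, hmax⟩ := hcompact.exists_isMaxOn hne hf
  exact ⟨Z, hZ, fun W hW => hmax hW⟩


lemma transpose_E {k : ℕ} (a b : Fin k) : (single a b (1:ℝ))ᵀ = single b a 1 := by
  ext x y; simp [single, and_comm]

lemma trace_E_mul {k : ℕ} (a b : Fin k) (B : Matrix (Fin k) (Fin k) ℝ) :
    (single a b (1:ℝ) * B).trace = B b a := by
  rw [Matrix.trace]
  rw [Finset.sum_eq_single a]
  · simp
  · intro l _ hl; simp [Matrix.diag, single_mul_apply_of_ne _ _ _ _ _ hl]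
  · simp

lemma givens_endgame (d e : ℝ)
    (key : ∀ c s : ℝ, c^2 + s^2 = 1 → (c - 1) * d - s * e ≤ 0) : e = 0 := by
  have hd0 : 0 ≤ d := by have := key (-1) 0 (by norm_num); linarith
  have hr0 : 0 ≤ Real.sqrt (d^2 + e^2) := Real.sqrt_nonneg _
  set r := Real.sqrt (d^2 + e^2) with hr
  have hr2 : r^2 = d^2 + e^2 := Real.sq_sqrt (by positivity)
  have hdr : d ≤ r := by nlinarith
  rcases eq_or_lt_of_le hr0 with h0 | hpos
  · nlinarith
  · have hcs : (d/r)^2 + (-(e/r))^2 = 1 := by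
      field_simp
      nlinarith
    have hk := key (d/r) (-(e/r)) hcs
    have h2 : r * ((d/r - 1) * d - (-(e/r)) * e) ≤ 0 :=
      mul_nonpos_of_nonneg_of_nonpos hr0 hk
    have hexp : r * ((d/r - 1) * d - (-(e/r)) * e) = d*d - r*d + e*e := by
      field_simp
      ring
    nlinarith [h2, hexp, hdr, hr2, hpos, sq_nonneg e, sq_nonneg (r - d)]

lemma max_symm {k : ℕ} (B : Matrix (Fin k) (Fin k) ℝ)
    (hmax : ∀ R : Matrix (Fin k) (Fin k) ℝ, Rᵀ * R = 1 → (Rᵀ * B).trace ≤ B.trace) :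
    Bᵀ = B := by
  ext i j
  rw [transpose_apply]
  by_cases hij : i = j
  · rw [hij]
  set P : Matrix (Fin k) (Fin k) ℝ := single i i 1 + single j j 1 with hP
  set K : Matrix (Fin k) (Fin k) ℝ := single i j 1 - single j i 1 with hK
  have hij' : j ≠ i := Ne.symm hij
  have hP2 : P * P = P := by
    simp [hP, add_mul, mul_add, single_mul_single_of_ne, hij, hij']
  have hPK : P * K = K := by
    simp [hP, hK, add_mul, mul_add, mul_sub, sub_mul,
      single_mul_single_of_ne, hij, hij']
  have hKP : K * P = K := by
    simp [hP, hK, add_mul, mul_add, mul_sub, sub_mul,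
      single_mul_single_of_ne, hij, hij'] <;> abel
  have hK2 : K * K = -P := by
    simp [hP, hK, add_mul, mul_add, mul_sub, sub_mul,
      single_mul_single_of_ne, hij, hij'] <;> abel
  have hPT : Pᵀ = P := by rw [hP, transpose_add, transpose_E, transpose_E]
  have hKT : Kᵀ = -K := by rw [hK, transpose_sub, transpose_E, transpose_E, neg_sub]
  have hPB : (P * B).trace = B i i + B j j := by
    rw [hP, add_mul, trace_add, trace_E_mul, trace_E_mul]
  have hKB : (K * B).trace = B j i - B i j := by
    rw [hK, sub_mul, trace_sub, trace_E_mul, trace_E_mul]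
  have key : ∀ c s : ℝ, c^2 + s^2 = 1 →
      (c - 1) * (B i i + B j j) - s * (B j i - B i j) ≤ 0 := by
    intro c s hcs
    set R : Matrix (Fin k) (Fin k) ℝ := 1 + (c - 1) • P + s • K with hR
    have hRT : Rᵀ = 1 + (c - 1) • P - s • K := by
      rw [hR, transpose_add, transpose_add, transpose_one, transpose_smul, transpose_smul,
        hPT, hKT, smul_neg]
      abel
    have hRorth : Rᵀ * R = 1 := by
      rw [hRT, hR]
      have expand : (1 + (c - 1) • P - s • K) * (1 + (c - 1) • P + s • K)
          = 1 + ((c - 1) + (c - 1)) • P + ((c-1)*(c-1)) • (P*P) + ((c-1)*s) • (P*K)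
            - (s*(c-1)) • (K*P) - (s*s) • (K*K) := by
        simp only [mul_add, add_mul, sub_mul, mul_sub, one_mul, mul_one,
          smul_mul_assoc, mul_smul_comm, smul_smul]
        module
      rw [expand, hP2, hPK, hKP, hK2]
      have h2 : 1 + ((c - 1) + (c - 1)) • P + ((c-1)*(c-1)) • P + ((c-1)*s) • K
            - (s*(c-1)) • K - (s*s) • (-P)
          = 1 + ((c^2 + s^2) - 1) • P := by module
      rw [h2, hcs]
      simp
    have htr : (Rᵀ * B).trace
        = B.trace + ((c - 1) * (B i i + B j j) - s * (B j i - B i j)) := by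
      rw [hRT, sub_mul, add_mul, one_mul, smul_mul_assoc, smul_mul_assoc,
        trace_sub, trace_add, trace_smul, trace_smul, hPB, hKB]
      simp only [smul_eq_mul]
      ring
    have := hmax R hRorth
    linarith [htr ▸ this]
  have he0 : B j i - B i j = 0 := givens_endgame (B i i + B j j) (B j i - B i j) key
  linarith

lemma trace_vecMulVec_mul {k : ℕ} (v : Fin k → ℝ) (B : Matrix (Fin k) (Fin k) ℝ) :
    (vecMulVec v v * B).trace = v ⬝ᵥ (B *ᵥ v) := by
  simp only [Matrix.trace, Matrix.diag, mul_apply, vecMulVec_apply, dotProduct, mulVec,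
    Finset.mul_sum]
  rw [Finset.sum_comm]
  exact Finset.sum_congr rfl fun a _ => Finset.sum_congr rfl fun b _ => by ring

lemma max_psd {k : ℕ} (B : Matrix (Fin k) (Fin k) ℝ) (hsym : Bᵀ = B)
    (hmax : ∀ R : Matrix (Fin k) (Fin k) ℝ, Rᵀ * R = 1 → (Rᵀ * B).trace ≤ B.trace) :
    B.PosSemidef := by
  have hqf : ∀ v : Fin k → ℝ, v ⬝ᵥ v = 1 → 0 ≤ v ⬝ᵥ (B *ᵥ v) := by
    intro v hv
    set M : Matrix (Fin k) (Fin k) ℝ := vecMulVec v v with hM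
    have hMT : Mᵀ = M := by
      ext a b; simp [hM, vecMulVec_apply, mul_comm]
    have hMM : M * M = M := by
      ext a b
      simp only [hM, mul_apply, vecMulVec_apply]
      have : ∀ l, (v a * v l) * (v l * v b) = (v a * v b) * (v l * v l) := fun l => by ring
      simp_rw [this, ← Finset.mul_sum]
      simpa [dotProduct] using congrArg (fun t => v a * v b * t) hv
    set R : Matrix (Fin k) (Fin k) ℝ := 1 - (2:ℝ) • M with hR
    have hRT : Rᵀ = R := by
      rw [hR, transpose_sub, transpose_smul, hMT, transpose_one]
    have hRorth : Rᵀ * R = 1 := by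
      rw [hRT, hR]
      have expand : (1 - (2:ℝ) • M) * (1 - (2:ℝ) • M)
          = 1 - (2:ℝ) • M - (2:ℝ) • M + (4:ℝ) • (M * M) := by
        simp only [mul_sub, sub_mul, mul_one, one_mul, smul_mul_assoc, mul_smul_comm, smul_smul]
        module
      rw [expand, hMM]
      module
    have htr : (Rᵀ * B).trace = B.trace - 2 * (v ⬝ᵥ (B *ᵥ v)) := by
      rw [hRT, hR, sub_mul, one_mul, smul_mul_assoc, trace_sub, trace_smul,
        trace_vecMulVec_mul]
      simp
    have := hmax R hRorth
    rw [htr] at this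
    linarith
  rw [posSemidef_iff_dotProduct_mulVec]
  constructor
  · rw [Matrix.IsHermitian, conjTranspose_eq_transpose_of_trivial, hsym]
  · intro x
    rw [star_trivial]
    by_cases hx : x = 0
    · simp [hx]
    · have hxx : 0 < x ⬝ᵥ x := by
        obtain ⟨i, hi⟩ := Function.ne_iff.mp hx
        exact Finset.sum_pos' (fun l _ => mul_self_nonneg (x l))
          ⟨i, Finset.mem_univ i, mul_self_pos.mpr hi⟩
      set t := Real.sqrt (x ⬝ᵥ x) with ht
      have ht2 : t^2 = x ⬝ᵥ x := Real.sq_sqrt hxx.le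
      have htpos : 0 < t := Real.sqrt_pos.mpr hxx
      have hv : (t⁻¹ • x) ⬝ᵥ (t⁻¹ • x) = 1 := by
        rw [smul_dotProduct, dotProduct_smul]
        simp only [smul_eq_mul]
        field_simp
        nlinarith
      have h := hqf (t⁻¹ • x) hv
      rw [mulVec_smul, smul_dotProduct, dotProduct_smul] at h
      have h2 : 0 ≤ t⁻¹ * (t⁻¹ * (x ⬝ᵥ (B *ᵥ x))) := by simpa using h
      have h3 : 0 ≤ (t*t) * (t⁻¹ * (t⁻¹ * (x ⬝ᵥ (B *ᵥ x)))) := mul_nonneg (by positivity) h2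
      have h4 : (t*t) * (t⁻¹ * (t⁻¹ * (x ⬝ᵥ (B *ᵥ x)))) = x ⬝ᵥ (B *ᵥ x) := by field_simp
      linarith

lemma trace_sq_le {k : ℕ} (B : Matrix (Fin k) (Fin k) ℝ)
    (hpsd : B.PosSemidef) (h1 : (1 - B * B).PosSemidef) :
    (B * B).trace ≤ B.trace := by
  have hherm : B.IsHermitian := hpsd.1
  set V : Matrix (Fin k) (Fin k) ℝ := (IsHermitian.eigenvectorUnitary hherm : Matrix (Fin k) (Fin k) ℝ) with hVdef
  set g : Fin k → ℝ := RCLike.ofReal ∘ hherm.eigenvalues with hgdef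
  have hD : star V * B * V = diagonal g := by
    have := hherm.conjStarAlgAut_star_eigenvectorUnitary
    rwa [Unitary.conjStarAlgAut_star_apply] at this
  have hsVV : star V * V = 1 := by
    exact Matrix.mem_unitaryGroup_iff'.mp (IsHermitian.eigenvectorUnitary hherm).2
  have hVsV : V * star V = 1 := by
    exact Matrix.mem_unitaryGroup_iff.mp (IsHermitian.eigenvectorUnitary hherm).2
  have hDpsd : PosSemidef (diagonal g) := by
    rw [← hD, Matrix.star_eq_conjTranspose]
    exact hpsd.conjTranspose_mul_mul_same V
  have hg : 0 ≤ g := posSemidef_diagonal_iff.mp hDpsd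
  have hD2 : star V * (B * B) * V = diagonal g * diagonal g := by
    rw [← hD]
    symm
    calc star V * B * V * (star V * B * V)
        = star V * B * (V * star V) * B * V := by simp only [Matrix.mul_assoc]
      _ = star V * (B * B) * V := by rw [hVsV]; simp only [Matrix.mul_one, Matrix.mul_assoc]
  have h1D : PosSemidef (1 - diagonal g * diagonal g) := by
    have h2 := h1.conjTranspose_mul_mul_same V
    rw [← Matrix.star_eq_conjTranspose] at h2
    have e2 : star V * (1 - B * B) * V = 1 - diagonal g * diagonal g := by
      rw [Matrix.mul_sub, Matrix.mul_one, Matrix.sub_mul, hsVV, hD2]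
    rwa [e2] at h2
  have hgle : ∀ i, g i * g i ≤ 1 := by
    have e3 : (1 : Matrix (Fin k) (Fin k) ℝ) - diagonal g * diagonal g
        = diagonal (fun i => 1 - g i * g i) := by
      rw [diagonal_mul_diagonal, ← diagonal_one, diagonal_sub]
    rw [e3] at h1D
    intro i
    have := posSemidef_diagonal_iff.mp h1D i
    simpa using this
  have htrB : B.trace = ∑ i, g i := by
    have e4 : (diagonal g).trace = B.trace := by
      rw [← hD, trace_mul_cycle, hVsV, Matrix.one_mul]
    rw [← e4, trace_diagonal]
  have htrBB : (B * B).trace = ∑ i, g i * g i := by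
    have : (diagonal g * diagonal g).trace = (B * B).trace := by
      rw [← hD2, trace_mul_cycle, hVsV, Matrix.one_mul]
    rw [← this, diagonal_mul_diagonal, trace_diagonal]
  rw [htrB, htrBB]
  apply Finset.sum_le_sum
  intro i _
  have h0 : (0:ℝ) ≤ g i := by simpa using hg i
  have h1 := hgle i
  nlinarith

lemma sum_sq_eq_trace {n k : ℕ} (M : Matrix (Fin n) (Fin k) ℝ) :
    ∑ r, ∑ c, (M r c) ^ 2 = (Mᵀ * M).trace := by
  simp only [Matrix.trace, Matrix.diag, mul_apply, transpose_apply, sq]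
  rw [Finset.sum_comm]

/-- `min_{Z orthogonal} ‖U₁ − XZ‖_F ≤ √2 ‖X⊥ᵀU₁‖_F`. -/
theorem orthogonal_procrustes_bound
    (n k m : ℕ)
    (U1 X : Matrix (Fin n) (Fin k) ℝ) (Xp : Matrix (Fin n) (Fin m) ℝ)
    (hU1 : U1ᵀ * U1 = 1) (hX : Xᵀ * X = 1) (hXp : Xpᵀ * Xp = 1)
    (hXXp : Xᵀ * Xp = 0) (hcomplete : X * Xᵀ + Xp * Xpᵀ = 1) :
    ∃ Z : Matrix (Fin k) (Fin k) ℝ, Zᵀ * Z = 1 ∧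
      Real.sqrt (∑ r, ∑ c, (U1 r c - (X * Z) r c) ^ 2) ≤
        Real.sqrt 2 * Real.sqrt (∑ r, ∑ c, ((Xpᵀ * U1) r c) ^ 2) := by
  set A : Matrix (Fin k) (Fin k) ℝ := Xᵀ * U1 with hA
  have hkey : (Xpᵀ * U1)ᵀ * (Xpᵀ * U1) = 1 - Aᵀ * A := by
    have e1 : (Xpᵀ * U1)ᵀ * (Xpᵀ * U1) = U1ᵀ * (Xp * Xpᵀ) * U1 := by
      rw [transpose_mul, transpose_transpose]
      simp only [Matrix.mul_assoc]
    have e2 : Xp * Xpᵀ = 1 - X * Xᵀ := by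
      rw [← hcomplete]; abel
    rw [e1, e2, Matrix.mul_sub, Matrix.mul_one, Matrix.sub_mul, hU1]
    congr 1
    rw [hA, transpose_mul, transpose_transpose]
    simp only [Matrix.mul_assoc]
  have hPSD1 : PosSemidef (1 - Aᵀ * A) := by
    rw [← hkey]
    have := posSemidef_conjTranspose_mul_self (Xpᵀ * U1)
    rwa [conjTranspose_eq_transpose_of_trivial] at this
  obtain ⟨Z, hZ, hmaxZ⟩ := exists_max_orth k A
  refine ⟨Z, hZ, ?_⟩
  set B : Matrix (Fin k) (Fin k) ℝ := Zᵀ * A with hB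
  have hmaxB : ∀ R : Matrix (Fin k) (Fin k) ℝ, Rᵀ * R = 1 → (Rᵀ * B).trace ≤ B.trace := by
    intro R hR
    have hW : (Z * R)ᵀ * (Z * R) = 1 := by
      rw [transpose_mul, Matrix.mul_assoc, ← Matrix.mul_assoc Zᵀ Z R, hZ, Matrix.one_mul, hR]
    have h := hmaxZ (Z * R) hW
    rw [transpose_mul, Matrix.mul_assoc, ← hB] at h
    exact h
  have hsym : Bᵀ = B := max_symm B hmaxB
  have hpsdB : B.PosSemidef := max_psd B hsym hmaxB
  have hZZT : Z * Zᵀ = 1 := mul_eq_one_comm.mp hZ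
  have hBB : B * B = Aᵀ * A := by
    have e3 : Bᵀ * B = Aᵀ * A := by
      rw [hB, transpose_mul, transpose_transpose, Matrix.mul_assoc,
        ← Matrix.mul_assoc Z Zᵀ A, hZZT, Matrix.one_mul]
    rw [← e3, hsym]
  have htr : (Aᵀ * A).trace ≤ B.trace := by
    have := trace_sq_le B hpsdB (by rw [hBB]; exact hPSD1)
    rwa [hBB] at this
  -- trace computations
  have hs1 : ∑ r, ∑ c, (U1 r c - (X * Z) r c) ^ 2
      = 2 * (1 : Matrix (Fin k) (Fin k) ℝ).trace - 2 * B.trace := by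
    have e4 : ∀ r c, U1 r c - (X * Z) r c = (U1 - X * Z) r c := fun r c => by
      simp [Matrix.sub_apply]
    simp_rw [e4]
    rw [sum_sq_eq_trace]
    have expand : (U1 - X * Z)ᵀ * (U1 - X * Z)
        = U1ᵀ * U1 - U1ᵀ * (X * Z) - (X * Z)ᵀ * U1 + (X * Z)ᵀ * (X * Z) := by
      rw [transpose_sub, Matrix.sub_mul, Matrix.mul_sub, Matrix.mul_sub]
      abel
    have t2 : U1ᵀ * (X * Z) = Bᵀ := by
      rw [hB, hA, transpose_mul, transpose_mul, transpose_transpose]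
      simp only [Matrix.mul_assoc, transpose_transpose]
    have t3 : (X * Z)ᵀ * U1 = B := by
      rw [hB, hA, transpose_mul]
      simp only [Matrix.mul_assoc]
    have t4 : (X * Z)ᵀ * (X * Z) = 1 := by
      rw [transpose_mul, Matrix.mul_assoc, ← Matrix.mul_assoc Xᵀ X Z, hX, Matrix.one_mul, hZ]
    rw [expand, hU1, t2, t3, t4, trace_add, trace_sub, trace_sub, trace_transpose]
    ring
  have hs2 : ∑ r, ∑ c, ((Xpᵀ * U1) r c) ^ 2
      = (1 : Matrix (Fin k) (Fin k) ℝ).trace - (Aᵀ * A).trace := by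
    rw [sum_sq_eq_trace, hkey, trace_sub]
  rw [hs1, hs2, ← Real.sqrt_mul (by norm_num : (0:ℝ) ≤ 2)]
  apply Real.sqrt_le_sqrt
  linarith
end

section
/- Eigenvalues of the average SBM modularity matrix: with M̄ the average Newman–Girvan modularity matrix of the SBM with parameters (Θ, B), N = Diag(√n₁,…,√n_k), δᵢ = ∑ⱼ b_{ij}nⱼ, and ν = ∑_{i,j} b_{ij}nᵢnⱼ, the nonzero eigenvalues of M̄ coincide (with multiplicities) with the nonzero eigenvalues of the k×k matrix N(B − δδᵀ/ν)N. Furthermore, if (λ, v) is an eigenpair of N(B − δδᵀ/ν)N, then z = N⁻¹v ×× 1 (the block-constant vector whose entries on block j equal vⱼ/√nⱼ) satisfies M̄z = λz. -/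
open Matrix Finset Polynomial

private lemma smul_one_sub_key {K : Type*} [Field K] {j : Type*} [Fintype j] [DecidableEq j]
    (x : K) (hx : x ≠ 0) (A : Matrix j j K) :
    x • (1 : Matrix j j K) - A = x • ((1 : Matrix j j K) + (-x⁻¹) • A) := by
  rw [smul_add, smul_smul, sub_eq_add_neg]
  congr 1
  rw [mul_neg, mul_inv_cancel₀ hx, neg_smul, one_smul]

lemma det_smul_one_sub_mul {K : Type*} [Field K] {n k : Type*} [Fintype n] [Fintype k]
    [DecidableEq n] [DecidableEq k] (x : K) (hx : x ≠ 0)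
    (P : Matrix n k K) (Q : Matrix k n K) :
    (x • (1 : Matrix n n K) - P * Q).det
      = x ^ Fintype.card n * (x⁻¹ ^ Fintype.card k *
        (x • (1 : Matrix k k K) - Q * P).det) := by
  have h1 : x • (1 : Matrix n n K) - P * Q
      = x • ((1 : Matrix n n K) + ((-x⁻¹) • P) * Q) := by
    rw [smul_one_sub_key x hx (P * Q), Matrix.smul_mul]
  have h2 : x • (1 : Matrix k k K) - Q * P
      = x • ((1 : Matrix k k K) + Q * ((-x⁻¹) • P)) := by
    rw [smul_one_sub_key x hx (Q * P), Matrix.mul_smul]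
  have hcanc : x⁻¹ ^ Fintype.card k * x ^ Fintype.card k = 1 := by
    rw [← mul_pow, inv_mul_cancel₀ hx, one_pow]
  rw [h1, h2, det_smul, det_smul, det_one_add_mul_comm, ← mul_assoc (x⁻¹ ^ Fintype.card k),
    hcanc, one_mul]

private lemma charmatrix_map_ringHom {R S : Type*} [CommRing R] [CommRing S]
    {j : Type*} [Fintype j] [DecidableEq j] (f : R[X] →+* S) (M : Matrix j j R) :
    (charmatrix M).map f = f X • (1 : Matrix j j S) - M.map (f.comp (C : R →+* R[X])) := by
  ext i i'
  by_cases h : i = i' <;>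
    simp [charmatrix, Matrix.map_apply, Matrix.one_apply, h, Matrix.diagonal, map_sub]

lemma charpoly_mul_comm_rect {n k : ℕ} (hkn : k ≤ n)
    (P : Matrix (Fin n) (Fin k) ℝ) (Q : Matrix (Fin k) (Fin n) ℝ) :
    (P * Q).charpoly = X ^ (n - k) * (Q * P).charpoly := by
  set K := FractionRing ℝ[X]
  set f : ℝ[X] →+* K := algebraMap ℝ[X] K with hfdef
  have hf : Function.Injective f := IsFractionRing.injective _ _
  apply hf
  have hx : f X ≠ 0 := fun h => Polynomial.X_ne_zero (hf (by simpa using h))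
  set c : ℝ →+* K := f.comp (C : ℝ →+* ℝ[X]) with hcdef
  rw [_root_.map_mul, map_pow, Matrix.charpoly, Matrix.charpoly, RingHom.map_det,
    RingHom.map_det, RingHom.mapMatrix_apply, RingHom.mapMatrix_apply,
    charmatrix_map_ringHom, charmatrix_map_ringHom, Matrix.map_mul (L := P) (M := Q),
    Matrix.map_mul (L := Q) (M := P),
    det_smul_one_sub_mul (f X) hx (P.map c) (Q.map c)]
  simp only [Fintype.card_fin]
  rw [← mul_assoc, inv_pow, ← pow_sub₀ (f X) hx hkn]

private lemma sum_fiber_eq {n k : ℕ} (g : Fin n → Fin k) (m : Fin k → ℕ)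
    (hm : ∀ b : Fin k, m b = (Finset.univ.filter fun i => g i = b).card)
    (f : Fin k → ℝ) : ∑ j : Fin n, f (g j) = ∑ b : Fin k, (m b : ℝ) * f b := by
  rw [← Finset.sum_fiberwise Finset.univ g (fun j => f (g j))]
  refine Finset.sum_congr rfl fun b _ => ?_
  rw [Finset.sum_congr rfl (fun j hj => ?_), Finset.sum_const, hm, nsmul_eq_mul]
  · rw [(Finset.mem_filter.mp hj).2]

/-- Nonzero eigenvalues of the average SBM modularity matrix `M̄` coincide, with
multiplicities, with those of the `k×k` matrix `N(B − δδᵀ/ν)N` (stated via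
characteristic polynomials), and eigenpairs of the small matrix lift to
eigenpairs of `M̄` via block-constant vectors. -/
theorem sbm_modularity_eigenvalues
    (n k : ℕ) (hkn : k ≤ n) (g : Fin n → Fin k)
    (B : Matrix (Fin k) (Fin k) ℝ) (hB : B.IsSymm)
    (m : Fin k → ℕ)
    (hm : ∀ b : Fin k, m b = (Finset.univ.filter fun i => g i = b).card)
    (hm0 : ∀ b : Fin k, 0 < m b)
    (Abar : Matrix (Fin n) (Fin n) ℝ)
    (hAbar : Abar = Matrix.of fun i j => B (g i) (g j))
    (dbar : Fin n → ℝ) (hdbar : dbar = Abar *ᵥ 1)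
    (ν : ℝ) (hν : ν = ∑ a, ∑ b, B a b * m a * m b) (hνpos : 0 < ν)
    (Mbar : Matrix (Fin n) (Fin n) ℝ)
    (hMbar : Mbar = Abar - Matrix.of fun i j => dbar i * dbar j / ν)
    (δ : Fin k → ℝ) (hδ : ∀ b : Fin k, δ b = ∑ c, B b c * m c)
    (N : Matrix (Fin k) (Fin k) ℝ)
    (hN : N = Matrix.diagonal fun b => Real.sqrt (m b))
    (S : Matrix (Fin k) (Fin k) ℝ)
    (hS : S = N * (B - Matrix.of fun a b => δ a * δ b / ν) * N) :
    Mbar.charpoly = Polynomial.X ^ (n - k) * S.charpoly ∧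
    ∀ (lam : ℝ) (v : Fin k → ℝ), S *ᵥ v = lam • v →
      Mbar *ᵥ (fun i => v (g i) / Real.sqrt (m (g i))) =
        lam • fun i => v (g i) / Real.sqrt (m (g i)) := by
  set Cmat : Matrix (Fin k) (Fin k) ℝ := B - Matrix.of fun a b => δ a * δ b / ν with hCmat
  set Θ : Matrix (Fin n) (Fin k) ℝ := Matrix.of fun i b => if g i = b then 1 else 0 with hΘ
  have hsq : ∀ b : Fin k, Real.sqrt (m b) * Real.sqrt (m b) = (m b : ℝ) := fun b =>
    Real.mul_self_sqrt (Nat.cast_nonneg _)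
  have hsqne : ∀ b : Fin k, Real.sqrt (m b) ≠ 0 := fun b =>
    ne_of_gt (Real.sqrt_pos.mpr (by exact_mod_cast hm0 b))
  have hdg : ∀ i, dbar i = δ (g i) := by
    intro i
    rw [hdbar, hδ]
    simp only [hAbar, Matrix.mulVec, dotProduct, Pi.one_apply, mul_one, Matrix.of_apply]
    rw [sum_fiber_eq g m hm (fun c => B (g i) c)]
    exact Finset.sum_congr rfl fun c _ => mul_comm _ _
  have hMentry : ∀ i j, Mbar i j = Cmat (g i) (g j) := by
    intro i j
    rw [hMbar, hCmat]
    simp [hAbar, hdg]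
  have hfactor : Mbar = Θ * (Cmat * Θᵀ) := by
    ext i j
    rw [hMentry]
    simp only [Matrix.mul_apply, hΘ, Matrix.of_apply, Matrix.transpose_apply, ite_mul,
      mul_ite, one_mul, mul_one, mul_zero, zero_mul, Finset.sum_ite_eq, Finset.mem_univ,
      if_true]
  have hTT : Θᵀ * Θ = Matrix.diagonal (fun b => (m b : ℝ)) := by
    ext a b
    by_cases hab : a = b
    · subst hab
      simp only [Matrix.mul_apply, Matrix.transpose_apply, hΘ, Matrix.of_apply,
        Matrix.diagonal_apply_eq]
      rw [show (∑ i, (if g i = a then (1:ℝ) else 0) * (if g i = a then 1 else 0))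
            = ∑ i, if g i = a then (1:ℝ) else 0 from
          Finset.sum_congr rfl (fun i _ => by split_ifs <;> ring),
        Finset.sum_boole, hm a]
    · simp only [Matrix.mul_apply, Matrix.transpose_apply, hΘ, Matrix.of_apply,
        Matrix.diagonal_apply_ne _ hab]
      refine Finset.sum_eq_zero fun i _ => ?_
      split_ifs with h1 h2
      · exact absurd (h1 ▸ h2) hab
      · ring
      · ring
      · ring
  have hNN : N * N = Matrix.diagonal (fun b => (m b : ℝ)) := by
    rw [hN, Matrix.diagonal_mul_diagonal]
    exact congrArg _ (funext fun b => hsq b)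
  constructor
  · rw [hfactor, charpoly_mul_comm_rect hkn Θ (Cmat * Θᵀ)]
    congr 1
    have h1 : Cmat * Θᵀ * Θ = (Cmat * N) * N := by
      rw [Matrix.mul_assoc, hTT, Matrix.mul_assoc, hNN]
    rw [h1, charpoly_mul_comm_rect (le_refl k) (Cmat * N) N, Nat.sub_self, pow_zero,
      one_mul, ← Matrix.mul_assoc, ← hS]
  · intro lam v hv
    funext i
    have hSab : ∀ a b, S a b = Real.sqrt (m a) * Cmat a b * Real.sqrt (m b) := by
      intro a b
      rw [hS, hN, Matrix.mul_diagonal, Matrix.diagonal_mul]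
    have key : ∀ a, ∑ b, Cmat a b * (Real.sqrt (m b) * v b)
        = lam * (v a / Real.sqrt (m a)) := by
      intro a
      have h2 : Real.sqrt (m a) * ∑ b, Cmat a b * (Real.sqrt (m b) * v b) = lam * v a := by
        have hrw : ∀ b ∈ Finset.univ,
            Real.sqrt (m a) * (Cmat a b * (Real.sqrt (m b) * v b)) = S a b * v b :=
          fun b _ => by rw [hSab a b]; ring
        rw [Finset.mul_sum, Finset.sum_congr rfl hrw]
        have hva := congrFun hv a
        simpa [Matrix.mulVec, dotProduct] using hva
      have h3 : ∑ b, Cmat a b * (Real.sqrt (m b) * v b)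
          = (lam * v a) / Real.sqrt (m a) := by
        rw [eq_div_iff (hsqne a), mul_comm]
        exact h2
      rw [h3, mul_div_assoc]
    have hterm : ∀ a b, (m b : ℝ) * (Cmat a b * (v b / Real.sqrt (m b)))
        = Cmat a b * (Real.sqrt (m b) * v b) := by
      intro a b
      have hd : (m b : ℝ) / Real.sqrt (m b) = Real.sqrt (m b) := Real.div_sqrt
      calc (m b : ℝ) * (Cmat a b * (v b / Real.sqrt (m b)))
          = Cmat a b * v b * ((m b : ℝ) / Real.sqrt (m b)) := by ring
        _ = Cmat a b * (Real.sqrt (m b) * v b) := by rw [hd]; ring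
    show (Mbar *ᵥ fun i => v (g i) / Real.sqrt (m (g i))) i
        = (lam • fun i => v (g i) / Real.sqrt (m (g i))) i
    simp only [Matrix.mulVec, dotProduct, Pi.smul_apply, smul_eq_mul]
    have hrw2 : ∀ j ∈ Finset.univ, Mbar i j * (v (g j) / Real.sqrt (m (g j)))
        = Cmat (g i) (g j) * (v (g j) / Real.sqrt (m (g j))) :=
      fun j _ => by rw [hMentry i j]
    rw [Finset.sum_congr rfl hrw2,
      sum_fiber_eq g m hm (fun b => Cmat (g i) b * (v b / Real.sqrt (m b))),
      Finset.sum_congr rfl (fun b _ => hterm (g i) b), key (g i)]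
end
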